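/- arXiv:2405.13782 — 3 statements merged into one kernel-verified Lean document; each statement's English description precedes it below -/
import Mathlib

section
/- Let A ≥ 1 and let Ω_n ⊂ ℂ be A-uniform domains whose complements E_n = ℂ \ Ω_n converge in the Hausdorff sense to a compact set E ⊂ ℂ. Then Ω = ℂ \ E is an A-uniform domain (in particular it is connected). -/
open Set Metric Filter Topology
open scoped ENNReal

set_option maxHeartbeats 1000000
set_option synthInstance.maxHeartbeats 400000

noncomputable section

/-- `S` is a connected component of the complement of `Ω`. -/
def IsComplComponent (Ω S : Set ℂ) : Prop := ∃ z ∈ Ωᶜ, S = connectedComponentIn Ωᶜ z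

/-- The inner length metric `λ_Ω`: infimum of lengths of curves in `Ω` joining the points. -/
def innerLen (Ω : Set ℂ) (a b : ℂ) : ℝ≥0∞ :=
  ⨅ γ : {γ : ℝ → ℂ // ContinuousOn γ (Set.Icc 0 1) ∧ Set.MapsTo γ (Set.Icc 0 1) Ω ∧
      γ 0 = a ∧ γ 1 = b}, eVariationOn γ.1 (Set.Icc 0 1)

/-- The inner diameter metric `ρ_Ω`: infimum of diameters of curves in `Ω` joining the points. -/
def innerDiam (Ω : Set ℂ) (a b : ℂ) : ℝ≥0∞ :=
  ⨅ γ : {γ : ℝ → ℂ // ContinuousOn γ (Set.Icc 0 1) ∧ Set.MapsTo γ (Set.Icc 0 1) Ω ∧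
      γ 0 = a ∧ γ 1 = b}, EMetric.diam (γ.1 '' Set.Icc 0 1)

/-- An inner `A`-uniform curve (length version) in `Ω`. -/
def IsInnerUniformCurve (A : ℝ) (Ω : Set ℂ) (γ : ℝ → ℂ) : Prop :=
  ContinuousOn γ (Set.Icc 0 1) ∧ Set.MapsTo γ (Set.Icc 0 1) Ω ∧
  eVariationOn γ (Set.Icc 0 1) ≤ ENNReal.ofReal A * innerLen Ω (γ 0) (γ 1) ∧
  ∀ t ∈ Set.Icc (0:ℝ) 1,
    min (eVariationOn γ (Set.Icc 0 t)) (eVariationOn γ (Set.Icc t 1))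
      ≤ ENNReal.ofReal (A * Metric.infDist (γ t) (frontier Ω))

/-- An inner `A`-uniform domain in the plane. -/
def IsInnerUniformDomain (A : ℝ) (Ω : Set ℂ) : Prop :=
  IsOpen Ω ∧ IsConnected Ω ∧
  ∀ a ∈ Ω, ∀ b ∈ Ω, ∃ γ : ℝ → ℂ, IsInnerUniformCurve A Ω γ ∧ γ 0 = a ∧ γ 1 = b

/-- An `A`-uniform curve in `Ω`. -/
def IsUniformCurve (A : ℝ) (Ω : Set ℂ) (γ : ℝ → ℂ) : Prop :=
  ContinuousOn γ (Set.Icc 0 1) ∧ Set.MapsTo γ (Set.Icc 0 1) Ω ∧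
  eVariationOn γ (Set.Icc 0 1) ≤ ENNReal.ofReal (A * dist (γ 0) (γ 1)) ∧
  ∀ t ∈ Set.Icc (0:ℝ) 1,
    min (eVariationOn γ (Set.Icc 0 t)) (eVariationOn γ (Set.Icc t 1))
      ≤ ENNReal.ofReal (A * Metric.infDist (γ t) (frontier Ω))

/-- An `A`-uniform domain in the plane. -/
def IsUniformDomain (A : ℝ) (Ω : Set ℂ) : Prop :=
  IsOpen Ω ∧ IsConnected Ω ∧
  ∀ a ∈ Ω, ∀ b ∈ Ω, ∃ γ : ℝ → ℂ, IsUniformCurve A Ω γ ∧ γ 0 = a ∧ γ 1 = b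
open scoped Classical in

private lemma evar_small_right {γ : ℝ → ℂ} (hγ : ContinuousOn γ (Icc 0 1))
    (hbv : eVariationOn γ (Icc 0 1) ≠ ⊤) {c : ℝ} (hc : c ∈ Icc (0:ℝ) 1) {ε : ℝ} (hε : 0 < ε) :
    ∃ δ > 0, ∀ y ∈ Icc (0:ℝ) 1, c ≤ y → y ≤ c + δ →
      eVariationOn γ (Icc 0 1 ∩ Icc c y) ≤ ENNReal.ofReal (2 * ε) := by
  rcases eq_or_lt_of_le hc.2 with h1 | h1
  · -- c = 1
    refine ⟨1, one_pos, fun y hy hcy hyd => ?_⟩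
    have hyc : y = c := le_antisymm (hy.2.trans h1.ge) hcy
    have hss : (Icc (0:ℝ) 1 ∩ Icc c y).Subsingleton := by
      rintro z ⟨_, hz1, hz2⟩ w ⟨_, hw1, hw2⟩
      have hz : z = c := le_antisymm (hz2.trans hyc.le) hz1
      have hw : w = c := le_antisymm (hw2.trans hyc.le) hw1
      rw [hz, hw]
    rw [eVariationOn.subsingleton γ hss]
    exact zero_le
  · set V := eVariationOn γ (Icc 0 1 ∩ Icc c 1) with hV
    have hVfin : V ≠ ⊤ := ne_top_of_le_ne_top hbv (eVariationOn.mono γ inter_subset_left)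
    rcases le_or_gt V (ENNReal.ofReal ε) with hVε | hVε
    · refine ⟨1 - c, by linarith, fun y hy hcy hyd => ?_⟩
      refine le_trans (le_trans (eVariationOn.mono γ ?_) hVε) (ENNReal.ofReal_le_ofReal (by linarith))
      exact inter_subset_inter_right _ (Icc_subset_Icc_right hy.2)
    · have hsub : V - ENNReal.ofReal ε < V :=
        ENNReal.sub_lt_self hVfin ((lt_of_le_of_lt zero_le hVε).ne')
          (by simp [ENNReal.ofReal_pos.2 hε, ne_of_gt])
      obtain ⟨⟨n, ⟨x, xm, xmem⟩⟩, hlt⟩ :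
          ∃ p : ℕ × {u : ℕ → ℝ // Monotone u ∧ ∀ i, u i ∈ (Icc (0:ℝ) 1 ∩ Icc c 1)},
            V - ENNReal.ofReal ε <
              ∑ i ∈ Finset.range p.1, edist (γ ((p.2 : ℕ → ℝ) (i+1))) (γ ((p.2 : ℕ → ℝ) i)) :=
        lt_iSup_iff.mp hsub
      have hV2 : V < (∑ i ∈ Finset.range n, edist (γ (x (i+1))) (γ (x i))) + ENNReal.ofReal ε :=
        (ENNReal.sub_lt_iff_lt_right ENNReal.ofReal_ne_top hVε.le).mp hlt
      by_cases hne : ∃ i, c < x i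
      · set m := Nat.find hne with hmdef
        have hm : c < x m := Nat.find_spec hne
        have hxlt : ∀ i, i < m → x i = c := fun i hi =>
          le_antisymm (not_lt.1 (Nat.find_min hne hi)) (xmem i).2.1
        -- continuity at c
        obtain ⟨δ₁, hδ₁, hδspec⟩ := Metric.continuousWithinAt_iff.mp (hγ c hc) ε hε
        set t' := min (x m) (min (c + δ₁/2) 1) with ht'def
        have ht'c : c < t' := lt_min hm (lt_min (by linarith) h1)
        have ht'm : t' ≤ x m := min_le_left _ _
        have ht'S : t' ∈ Icc (0:ℝ) 1 :=
          ⟨hc.1.trans ht'c.le, (min_le_right _ _).trans (min_le_right _ _)⟩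
        have hedist : edist (γ t') (γ c) ≤ ENNReal.ofReal ε := by
          have hd : dist t' c < δ₁ := by
            rw [Real.dist_eq, abs_of_nonneg (by linarith)]
            have : t' ≤ c + δ₁/2 := (min_le_right _ _).trans (min_le_left _ _)
            linarith
          have := hδspec ht'S hd
          rw [edist_dist]
          exact ENNReal.ofReal_le_ofReal this.le
        set z : ℕ → ℝ := fun i => max (x i) t' with hzdef
        have zm : Monotone z := fun i j h => max_le_max (xm h) le_rfl
        have zmem : ∀ i, z i ∈ Icc (0:ℝ) 1 ∩ Icc t' 1 := fun i =>
          ⟨⟨le_trans ht'S.1 (le_max_right _ _), max_le (xmem i).1.2 ht'S.2⟩,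
            ⟨le_max_right _ _, max_le (xmem i).1.2 ht'S.2⟩⟩
        have key : ∀ i ∈ Finset.range n,
            edist (γ (x (i+1))) (γ (x i)) ≤
              edist (γ (z (i+1))) (γ (z i)) + (if i + 1 = m then ENNReal.ofReal ε else 0) := by
          intro i _
          rcases lt_trichotomy (i+1) m with h | h | h
          · rw [hxlt _ h, hxlt _ (Nat.lt_of_succ_lt h), edist_self]
            exact zero_le
          · have hxi : x i = c := hxlt _ (h ▸ i.lt_succ_self)
            have hz1 : z (i+1) = x (i+1) := max_eq_left (h ▸ ht'm)
            have hz0 : z i = t' := by rw [hzdef]; simp only [hxi]; exact max_eq_right ht'c.le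
            rw [hxi, hz1, hz0, if_pos h]
            calc edist (γ (x (i+1))) (γ c)
                ≤ edist (γ (x (i+1))) (γ t') + edist (γ t') (γ c) := edist_triangle _ _ _
              _ ≤ _ := add_le_add_right hedist _
          · have hmi : m ≤ i := Nat.lt_succ_iff.mp h
            have hz1 : z (i+1) = x (i+1) := max_eq_left (ht'm.trans (xm (hmi.trans i.le_succ)))
            have hz0 : z i = x i := max_eq_left (ht'm.trans (xm hmi))
            rw [hz1, hz0, if_neg (by omega)]
            simp
        have hsum : (∑ i ∈ Finset.range n, edist (γ (x (i+1))) (γ (x i))) ≤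
            (∑ i ∈ Finset.range n, edist (γ (z (i+1))) (γ (z i))) + ENNReal.ofReal ε := by
          calc (∑ i ∈ Finset.range n, edist (γ (x (i+1))) (γ (x i)))
              ≤ ∑ i ∈ Finset.range n, (edist (γ (z (i+1))) (γ (z i)) +
                  (if i + 1 = m then ENNReal.ofReal ε else 0)) := Finset.sum_le_sum key
            _ = (∑ i ∈ Finset.range n, edist (γ (z (i+1))) (γ (z i))) +
                  ∑ i ∈ Finset.range n, (if i + 1 = m then ENNReal.ofReal ε else 0) :=
              Finset.sum_add_distrib
            _ ≤ _ := by
                refine add_le_add_right ?_ _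
                calc (∑ i ∈ Finset.range n, (if i + 1 = m then ENNReal.ofReal ε else 0))
                    = ∑ i ∈ (Finset.range n).filter (fun i => i + 1 = m), ENNReal.ofReal ε :=
                      (Finset.sum_filter _ _).symm
                  _ ≤ ∑ i ∈ {m - 1}, ENNReal.ofReal ε := by
                      refine Finset.sum_le_sum_of_subset ?_
                      intro i hi
                      simp only [Finset.mem_filter, Finset.mem_range] at hi
                      simp only [Finset.mem_singleton]
                      omega
                  _ = ENNReal.ofReal ε := Finset.sum_singleton _ _
        have hzsum : (∑ i ∈ Finset.range n, edist (γ (z (i+1))) (γ (z i))) ≤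
            eVariationOn γ (Icc 0 1 ∩ Icc t' 1) := eVariationOn.sum_le (f := γ) (n := n) zm zmem
        have hVlt : V < eVariationOn γ (Icc 0 1 ∩ Icc t' 1) + ENNReal.ofReal (2 * ε) := by
          calc V < _ + ENNReal.ofReal ε := hV2
            _ ≤ ((∑ i ∈ Finset.range n, edist (γ (z (i+1))) (γ (z i))) + ENNReal.ofReal ε)
                + ENNReal.ofReal ε := by exact add_le_add_left hsum _
            _ ≤ _ := by
                rw [add_assoc, ← ENNReal.ofReal_add hε.le hε.le, two_mul]
                exact add_le_add_left hzsum _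
        have hadd : eVariationOn γ (Icc 0 1 ∩ Icc c t') + eVariationOn γ (Icc 0 1 ∩ Icc t' 1) = V :=
          eVariationOn.Icc_add_Icc γ ht'c.le ht'S.2 ht'S
        have hWfin : eVariationOn γ (Icc 0 1 ∩ Icc t' 1) ≠ ⊤ :=
          ne_top_of_le_ne_top hbv (eVariationOn.mono γ inter_subset_left)
        have hX : eVariationOn γ (Icc 0 1 ∩ Icc c t') < ENNReal.ofReal (2 * ε) := by
          rw [← hadd] at hVlt
          rw [add_comm (eVariationOn γ (Icc 0 1 ∩ Icc t' 1))] at hVlt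
          exact (ENNReal.add_lt_add_iff_right hWfin).mp hVlt
        refine ⟨t' - c, by linarith, fun y hy hcy hyd => ?_⟩
        refine le_trans (le_trans (eVariationOn.mono γ ?_) hX.le) le_rfl
        exact inter_subset_inter_right _ (Icc_subset_Icc_right (by linarith))
      · push_neg at hne
        have hxc : ∀ i, x i = c := fun i => le_antisymm (hne i) (xmem i).2.1
        have hz : (∑ i ∈ Finset.range n, edist (γ (x (i+1))) (γ (x i))) = 0 :=
          Finset.sum_eq_zero fun i _ => by rw [hxc, hxc, edist_self]
        have hVe : V < ENNReal.ofReal ε := by rwa [hz, zero_add] at hV2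
        refine ⟨1 - c, by linarith, fun y hy hcy hyd => ?_⟩
        refine le_trans (le_trans (eVariationOn.mono γ ?_) hVe.le)
          (ENNReal.ofReal_le_ofReal (by linarith))
        exact inter_subset_inter_right _ (Icc_subset_Icc_right hy.2)

private lemma evar_small_left {γ : ℝ → ℂ} (hγ : ContinuousOn γ (Icc 0 1))
    (hbv : eVariationOn γ (Icc 0 1) ≠ ⊤) {c : ℝ} (hc : c ∈ Icc (0:ℝ) 1) {ε : ℝ} (hε : 0 < ε) :
    ∃ δ > 0, ∀ y ∈ Icc (0:ℝ) 1, y ≤ c → c ≤ y + δ →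
      eVariationOn γ (Icc 0 1 ∩ Icc y c) ≤ ENNReal.ofReal (2 * ε) := by
  set σ : ℝ → ℝ := fun t => 1 - t with hσdef
  have hσanti : Antitone σ := fun s t h => by simp only [hσdef]; linarith
  have hσim : ∀ p q : ℝ, σ '' Icc p q = Icc (1 - q) (1 - p) := fun p q => by
    simp only [hσdef]; exact Set.image_const_sub_Icc 1 p q
  have hσinj : Function.Injective σ := fun s t h => by simp only [hσdef] at h; linarith
  have him : σ '' Icc (0:ℝ) 1 = Icc (0:ℝ) 1 := by rw [hσim]; norm_num
  have hγ' : ContinuousOn (γ ∘ σ) (Icc 0 1) := by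
    refine hγ.comp ((continuous_const.sub continuous_id).continuousOn) ?_
    intro t ht
    simp only [hσdef]
    exact ⟨by linarith [ht.2], by linarith [ht.1]⟩
  have hbveq : eVariationOn (γ ∘ σ) (Icc 0 1) = eVariationOn γ (Icc 0 1) := by
    rw [eVariationOn.comp_eq_of_antitoneOn γ σ (hσanti.antitoneOn _), him]
  have hbv' : eVariationOn (γ ∘ σ) (Icc 0 1) ≠ ⊤ := by rw [hbveq]; exact hbv
  have hc' : 1 - c ∈ Icc (0:ℝ) 1 := ⟨by linarith [hc.2], by linarith [hc.1]⟩
  obtain ⟨δ, hδ, hspec⟩ := evar_small_right hγ' hbv' hc' hε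
  refine ⟨δ, hδ, fun y hy hyc hcy => ?_⟩
  have hy' : 1 - y ∈ Icc (0:ℝ) 1 := ⟨by linarith [hy.2], by linarith [hy.1]⟩
  have h1 : 1 - c ≤ 1 - y := by linarith
  have h2 : 1 - y ≤ (1 - c) + δ := by linarith
  have := hspec (1 - y) hy' h1 h2
  have himeq : σ '' (Icc 0 1 ∩ Icc (1 - c) (1 - y)) = Icc 0 1 ∩ Icc y c := by
    rw [Set.image_inter hσinj, him, hσim]
    norm_num
  rwa [eVariationOn.comp_eq_of_antitoneOn γ σ (hσanti.antitoneOn _), himeq] at this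

private lemma variation_continuousOn {γ : ℝ → ℂ} (hγ : ContinuousOn γ (Icc 0 1))
    (hbv : eVariationOn γ (Icc 0 1) ≠ ⊤) :
    ContinuousOn (variationOnFromTo γ (Icc 0 1) 0) (Icc 0 1) := by
  have hlbv : LocallyBoundedVariationOn γ (Icc 0 1) :=
    BoundedVariationOn.locallyBoundedVariationOn hbv
  have h0S : (0:ℝ) ∈ Icc (0:ℝ) 1 := ⟨le_rfl, zero_le_one⟩
  intro c hc
  rw [Metric.continuousWithinAt_iff]
  intro ε' hε'
  have hε : 0 < ε' / 3 := by linarith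
  obtain ⟨δR, hδR, hR⟩ := evar_small_right hγ hbv hc hε
  obtain ⟨δL, hδL, hL⟩ := evar_small_left hγ hbv hc hε
  refine ⟨min δR δL, lt_min hδR hδL, fun y hy hd => ?_⟩
  have key : ∀ p q : ℝ, p ∈ Icc (0:ℝ) 1 → q ∈ Icc (0:ℝ) 1 → p ≤ q →
      eVariationOn γ (Icc 0 1 ∩ Icc p q) ≤ ENNReal.ofReal (2 * (ε'/3)) →
      dist (variationOnFromTo γ (Icc 0 1) 0 q) (variationOnFromTo γ (Icc 0 1) 0 p) < ε' := by
    intro p q hp hq hpq hvar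
    have hadd := variationOnFromTo.add hlbv h0S hp hq
    have heq : variationOnFromTo γ (Icc 0 1) 0 q - variationOnFromTo γ (Icc 0 1) 0 p
        = variationOnFromTo γ (Icc 0 1) p q := by linarith
    have hval : variationOnFromTo γ (Icc 0 1) p q
        = (eVariationOn γ (Icc 0 1 ∩ Icc p q)).toReal := variationOnFromTo.eq_of_le γ _ hpq
    have hnn : 0 ≤ variationOnFromTo γ (Icc 0 1) p q := variationOnFromTo.nonneg_of_le γ _ hpq
    rw [Real.dist_eq, heq, abs_of_nonneg hnn, hval]
    have : (eVariationOn γ (Icc 0 1 ∩ Icc p q)).toReal ≤ 2 * (ε'/3) := by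
      have := ENNReal.toReal_mono ENNReal.ofReal_ne_top hvar
      rwa [ENNReal.toReal_ofReal (by linarith)] at this
    linarith
  rcases le_total c y with hcy | hcy
  · have habs := abs_lt.1 (lt_of_lt_of_le (Real.dist_eq y c ▸ hd) (min_le_left _ _))
    exact key c y hc hy hcy (hR y hy hcy (by linarith))
  · have habs := abs_lt.1 (lt_of_lt_of_le (Real.dist_eq y c ▸ hd) (min_le_right _ _))
    have := key y c hy hc hcy (hL y hy hcy (by linarith))
    rwa [dist_comm]

private lemma reparam {γ : ℝ → ℂ} (hγ : ContinuousOn γ (Icc 0 1))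
    (hbv : eVariationOn γ (Icc 0 1) ≠ ⊤) :
    ∃ g : ℝ → ℂ,
      g 0 = γ 0 ∧ g 1 = γ 1 ∧
      LipschitzOnWith (eVariationOn γ (Icc 0 1)).toNNReal g (Icc 0 1) ∧
      ∀ t ∈ Icc (0:ℝ) 1, ∃ x ∈ Icc (0:ℝ) 1,
        g t = γ x ∧ eVariationOn g (Icc 0 t) ≤ eVariationOn γ (Icc 0 x) ∧
        eVariationOn g (Icc t 1) ≤ eVariationOn γ (Icc x 1) := by
  have hlbv : LocallyBoundedVariationOn γ (Icc 0 1) :=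
    BoundedVariationOn.locallyBoundedVariationOn hbv
  have h0S : (0:ℝ) ∈ Icc (0:ℝ) 1 := ⟨le_rfl, zero_le_one⟩
  have h1S : (1:ℝ) ∈ Icc (0:ℝ) 1 := ⟨zero_le_one, le_rfl⟩
  set v := variationOnFromTo γ (Icc 0 1) 0 with hvdef
  set L := (eVariationOn γ (Icc 0 1)).toReal with hLdef
  have hL0 : 0 ≤ L := ENNReal.toReal_nonneg
  have hv0 : v 0 = 0 := variationOnFromTo.self γ _ 0
  have hv1 : v 1 = L := by
    rw [hvdef, variationOnFromTo.eq_of_le γ _ zero_le_one, Set.inter_self]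
  have hvmono : MonotoneOn v (Icc 0 1) := variationOnFromTo.monotoneOn hlbv h0S
  have hvcont : ContinuousOn v (Icc 0 1) := variation_continuousOn hγ hbv
  have himg : v '' Icc 0 1 = Icc 0 L := by
    apply Subset.antisymm
    · rintro _ ⟨x, hx, rfl⟩
      exact ⟨by rw [← hv0]; exact hvmono h0S hx hx.1, by rw [← hv1]; exact hvmono hx h1S hx.2⟩
    · have := intermediate_value_Icc zero_le_one hvcont
      rw [hv0, hv1] at this
      exact this
  set ψ := Function.invFunOn v (Icc 0 1) with hψdef
  have hsurj : SurjOn v (Icc 0 1) (Icc 0 L) := by rw [← himg]; exact surjOn_image v _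
  have hψmaps : MapsTo ψ (Icc 0 L) (Icc 0 1) := hsurj.mapsTo_invFunOn
  have hψright : RightInvOn ψ v (Icc 0 L) := hsurj.rightInvOn_invFunOn
  have hψmono : MonotoneOn ψ (Icc 0 L) :=
    Function.monotoneOn_of_rightInvOn_of_mapsTo hvmono hψright hψmaps
  set φ : ℝ → ℝ := fun t => ψ (L * t) with hφdef
  have hmulmem : ∀ t ∈ Icc (0:ℝ) 1, L * t ∈ Icc 0 L := fun t ht =>
    ⟨mul_nonneg hL0 ht.1, mul_le_of_le_one_right hL0 ht.2⟩
  have hφmono : MonotoneOn φ (Icc 0 1) := fun s hs t ht hst =>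
    hψmono (hmulmem _ hs) (hmulmem _ ht) (mul_le_mul_of_nonneg_left hst hL0)
  have hφmaps : MapsTo φ (Icc 0 1) (Icc 0 1) := fun t ht => hψmaps (hmulmem _ ht)
  have hvφ : ∀ t ∈ Icc (0:ℝ) 1, v (φ t) = L * t := fun t ht => hψright (hmulmem _ ht)
  have hkey : ∀ x ∈ Icc (0:ℝ) 1, ∀ y ∈ Icc (0:ℝ) 1, v x = v y → γ x = γ y := by
    have main : ∀ x ∈ Icc (0:ℝ) 1, ∀ y ∈ Icc (0:ℝ) 1, x ≤ y → v x = v y → γ x = γ y := by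
      intro x hx y hy hxy heq
      have hadd := variationOnFromTo.add hlbv h0S hx hy
      have : variationOnFromTo γ (Icc 0 1) x y = 0 := by
        rw [hvdef] at heq; linarith
      exact edist_eq_zero.mp (variationOnFromTo.edist_zero_of_eq_zero hlbv hx hy this)
    intro x hx y hy heq
    rcases le_total x y with h | h
    exacts [main x hx y hy h heq, (main y hy x hx h heq.symm).symm]
  have hfin' : ∀ p q : ℝ, eVariationOn γ (Icc 0 1 ∩ Icc p q) ≠ ⊤ := fun p q =>
    ne_top_of_le_ne_top hbv (eVariationOn.mono γ inter_subset_left)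
  have hvar_eq : ∀ x ∈ Icc (0:ℝ) 1, ∀ y ∈ Icc (0:ℝ) 1, x ≤ y →
      eVariationOn γ (Icc 0 1 ∩ Icc (φ x) (φ y)) = ENNReal.ofReal (L * y - L * x) := by
    intro x hx y hy hxy
    have hpx := hφmaps hx
    have hpy := hφmaps hy
    have hpxy : φ x ≤ φ y := hφmono hx hy hxy
    have hadd := variationOnFromTo.add hlbv h0S hpx hpy
    have heq : variationOnFromTo γ (Icc 0 1) (φ x) (φ y) = L * y - L * x := by
      have h1 := hvφ x hx
      have h2 := hvφ y hy
      rw [hvdef] at h1 h2; linarith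
    rw [variationOnFromTo.eq_of_le γ _ hpxy] at heq
    rw [← ENNReal.ofReal_toReal (hfin' (φ x) (φ y)), heq]
  refine ⟨γ ∘ φ, ?_, ?_, ?_, ?_⟩
  · have hth : v (φ 0) = v 0 := by rw [hvφ 0 h0S, mul_zero, hv0]
    exact hkey _ (hφmaps h0S) _ h0S hth
  · have hth : v (φ 1) = v 1 := by rw [hvφ 1 h1S, mul_one, hv1]
    exact hkey _ (hφmaps h1S) _ h1S hth
  · have main : ∀ x ∈ Icc (0:ℝ) 1, ∀ y ∈ Icc (0:ℝ) 1, x ≤ y →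
        edist ((γ ∘ φ) x) ((γ ∘ φ) y) ≤
          ((eVariationOn γ (Icc 0 1)).toNNReal : ℝ≥0∞) * edist x y := by
      intro x hx y hy hxy
      have hpx := hφmaps hx
      have hpy := hφmaps hy
      have hpxy : φ x ≤ φ y := hφmono hx hy hxy
      have h1 : edist ((γ ∘ φ) x) ((γ ∘ φ) y) ≤ eVariationOn γ (Icc 0 1 ∩ Icc (φ x) (φ y)) :=
        eVariationOn.edist_le γ ⟨hpx, le_rfl, hpxy⟩ ⟨hpy, hpxy, le_rfl⟩
      rw [hvar_eq x hx y hy hxy] at h1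
      refine h1.trans ?_
      have : L * y - L * x = L * (y - x) := by ring
      rw [this, ENNReal.ofReal_mul hL0, hLdef, ENNReal.ofReal_toReal hbv,
        ENNReal.coe_toNNReal hbv]
      refine mul_le_mul_right ?_ _
      rw [edist_dist, Real.dist_eq, abs_of_nonpos (by linarith)]
      exact ENNReal.ofReal_le_ofReal (by linarith)
    intro x hx y hy
    rcases le_total x y with h | h
    · exact main x hx y hy h
    · rw [edist_comm, edist_comm x y]
      exact main y hy x hx h
  · intro t ht
    refine ⟨φ t, hφmaps ht, rfl, ?_, ?_⟩
    · have hmono' : MonotoneOn φ (Icc 0 t) := hφmono.mono (Icc_subset_Icc_right ht.2)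
      refine eVariationOn.comp_le_of_monotoneOn γ φ hmono' ?_
      intro r hr
      have hrS : r ∈ Icc (0:ℝ) 1 := ⟨hr.1, hr.2.trans ht.2⟩
      exact ⟨(hφmaps hrS).1, hφmono hrS ht hr.2⟩
    · have hmono' : MonotoneOn φ (Icc t 1) := hφmono.mono (Icc_subset_Icc_left ht.1)
      refine eVariationOn.comp_le_of_monotoneOn γ φ hmono' ?_
      intro r hr
      have hrS : r ∈ Icc (0:ℝ) 1 := ⟨ht.1.trans hr.1, hr.2⟩
      exact ⟨hφmono ht hrS hr.1, (hφmaps hrS).2⟩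

private lemma infDist_frontier_le_infDist_compl {U : Set ℂ} (hU : IsOpen U) {x : ℂ}
    (hx : x ∈ U) (hne : Uᶜ.Nonempty) :
    infDist x (frontier U) ≤ infDist x Uᶜ := by
  obtain ⟨y, hyU, hxy⟩ := hU.isClosed_compl.exists_infDist_eq_dist hne x
  have hyfr : y ∈ frontier U := by
    rw [frontier_eq_closure_inter_closure]
    refine ⟨?_, subset_closure hyU⟩
    rw [Metric.mem_closure_iff]
    intro ε hε
    rcases eq_or_ne x y with rfl | hxyne
    · exact ⟨x, hx, by simpa using hε⟩
    have hd : 0 < dist x y := dist_pos.mpr hxyne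
    set θ : ℝ := min (ε / (2 * dist x y)) (1/2) with hθdef
    have hθpos : 0 < θ := lt_min (by positivity) (by norm_num)
    have hθle : θ ≤ 1/2 := min_le_right _ _
    set z : ℂ := x + (1 - θ) • (y - x) with hzdef
    have hdistxz : dist x z = (1 - θ) * dist x y := by
      rw [dist_eq_norm, hzdef]
      have : x - (x + (1 - θ) • (y - x)) = (-(1 - θ)) • (y - x) := by
        rw [neg_smul]; ring_nf
      rw [this, norm_smul, Real.norm_eq_abs, abs_neg, abs_of_nonneg (by linarith),
        dist_eq_norm, norm_sub_rev]
    have hdistyz : dist y z = θ * dist x y := by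
      rw [dist_eq_norm, hzdef]
      have : y - (x + (1 - θ) • (y - x)) = θ • (y - x) := by
        rw [sub_smul, one_smul]; ring_nf
      rw [this, norm_smul, Real.norm_eq_abs, abs_of_nonneg hθpos.le, dist_eq_norm,
        norm_sub_rev]
    have hzU : z ∈ U := by
      by_contra hzU
      have : infDist x Uᶜ ≤ dist x z := infDist_le_dist_of_mem hzU
      rw [hxy] at this
      rw [hdistxz] at this
      nlinarith
    refine ⟨z, hzU, ?_⟩
    rw [hdistyz]
    calc θ * dist x y ≤ (ε / (2 * dist x y)) * dist x y :=
          mul_le_mul_of_nonneg_right (min_le_left _ _) hd.le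
      _ = ε / 2 := by field_simp
      _ < ε := by linarith
  rw [hxy]
  exact infDist_le_dist_of_mem hyfr

private lemma exists_unif_curve (A : ℝ) (hA : 1 ≤ A) (Ωs : ℕ → Set ℂ)
    (hunif : ∀ n, IsUniformDomain A (Ωs n)) (E : Set ℂ) (hE : IsCompact E)
    (hconv : Tendsto (fun n => EMetric.hausdorffEdist (Ωs n)ᶜ E) atTop (nhds 0))
    (hEne : E.Nonempty) {a b : ℂ} (ha : a ∈ Eᶜ) (hb : b ∈ Eᶜ) :
    ∃ γ : ℝ → ℂ, IsUniformCurve A Eᶜ γ ∧ γ 0 = a ∧ γ 1 = b := by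
  classical
  have hA0 : (0:ℝ) < A := lt_of_lt_of_le one_pos hA
  have h0S : (0:ℝ) ∈ Icc (0:ℝ) 1 := ⟨le_rfl, zero_le_one⟩
  have h1S : (1:ℝ) ∈ Icc (0:ℝ) 1 := ⟨zero_le_one, le_rfl⟩
  set r : ℝ := min (infDist a E) (infDist b E) with hrdef
  have hra : 0 < infDist a E := (hE.isClosed.notMem_iff_infDist_pos hEne).1 ha
  have hrb : 0 < infDist b E := (hE.isClosed.notMem_iff_infDist_pos hEne).1 hb
  have hr : 0 < r := lt_min hra hrb
  -- choose good indices
  have hsel : ∀ k : ℕ, ∃ n, EMetric.hausdorffEdist (Ωs n)ᶜ E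
      < ENNReal.ofReal (min (r/2) (1/(k+1))) := by
    intro k
    have hpos : (0:ℝ≥0∞) < ENNReal.ofReal (min (r/2) (1/(k+1))) :=
      ENNReal.ofReal_pos.2 (lt_min (by linarith) (by positivity))
    exact (hconv.eventually (gt_mem_nhds hpos)).exists
  choose n hn using hsel
  set K : NNReal := (ENNReal.ofReal (A * dist a b)).toNNReal with hKdef
  -- the uniform curves, reparametrized
  have hcurve : ∀ k : ℕ, ∃ g : ℝ → ℂ,
      g 0 = a ∧ g 1 = b ∧ LipschitzOnWith K g (Icc 0 1) ∧
      eVariationOn g (Icc 0 1) ≤ ENNReal.ofReal (A * dist a b) ∧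
      ∀ t ∈ Icc (0:ℝ) 1,
        min (eVariationOn g (Icc 0 t)) (eVariationOn g (Icc t 1))
          ≤ ENNReal.ofReal (A * (infDist (g t) E + 1/(k+1))) := by
    intro k
    have hd := hn k
    have hdne : EMetric.hausdorffEdist (Ωs (n k))ᶜ E ≠ ⊤ := ne_top_of_lt hd
    have hdreal : hausdorffDist (Ωs (n k))ᶜ E ≤ min (r/2) (1/(k+1)) := by
      have := ENNReal.toReal_mono ENNReal.ofReal_ne_top hd.le
      rwa [ENNReal.toReal_ofReal (le_min (by linarith) (by positivity))] at this
    have hcne : ((Ωs (n k))ᶜ).Nonempty := by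
      by_contra hc
      rw [not_nonempty_iff_eq_empty] at hc
      rw [hc, EMetric.hausdorffEdist, EMetric.hausdorffEdist_comm, EMetric.hausdorffEdist_empty hEne] at hd
      exact (lt_irrefl _ (hd.trans_le le_top)).elim
    have hmem : ∀ x ∈ Eᶜ, r ≤ infDist x E → x ∈ Ωs (n k) := by
      intro x hx hrx
      by_contra hxc
      have hxc' : x ∈ (Ωs (n k))ᶜ := hxc
      have h1 : infDist x E ≤ infDist x (Ωs (n k))ᶜ + hausdorffDist (Ωs (n k))ᶜ E :=
        infDist_le_infDist_add_hausdorffDist hdne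
      rw [infDist_zero_of_mem hxc', zero_add] at h1
      have := h1.trans (hdreal.trans (min_le_left _ _))
      linarith
    have haΩ : a ∈ Ωs (n k) := hmem a ha (min_le_left _ _)
    have hbΩ : b ∈ Ωs (n k) := hmem b hb (min_le_right _ _)
    obtain ⟨γ, ⟨hγcont, hγmaps, hγtot, hγcig⟩, hγ0, hγ1⟩ := (hunif (n k)).2.2 a haΩ b hbΩ
    rw [hγ0, hγ1] at hγtot
    have hbvk : eVariationOn γ (Icc 0 1) ≠ ⊤ :=
      ne_top_of_le_ne_top ENNReal.ofReal_ne_top hγtot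
    obtain ⟨g, hg0, hg1, hglip, hgspec⟩ := reparam hγcont hbvk
    refine ⟨g, by rw [hg0, hγ0], by rw [hg1, hγ1], ?_, ?_, ?_⟩
    · intro x hx y hy
      refine (hglip hx hy).trans (mul_le_mul_left ?_ _)
      exact ENNReal.coe_le_coe.2 (ENNReal.toNNReal_mono ENNReal.ofReal_ne_top hγtot)
    · obtain ⟨x, hx, _, h0t, _⟩ := hgspec 1 h1S
      refine h0t.trans (le_trans (eVariationOn.mono γ ?_) hγtot)
      exact Icc_subset_Icc_right hx.2
    · intro t ht
      obtain ⟨x, hx, hgx, h0t, ht1⟩ := hgspec t ht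
      refine (min_le_min h0t ht1).trans ((hγcig x hx).trans ?_)
      have hfr : infDist (γ x) (frontier (Ωs (n k))) ≤ infDist (g t) E + 1/(k+1) := by
        rw [hgx]
        calc infDist (γ x) (frontier (Ωs (n k)))
            ≤ infDist (γ x) (Ωs (n k))ᶜ :=
              infDist_frontier_le_infDist_compl (hunif (n k)).1 (hγmaps hx) hcne
          _ ≤ infDist (γ x) E + hausdorffDist E (Ωs (n k))ᶜ :=
              infDist_le_infDist_add_hausdorffDist
                (by rwa [EMetric.hausdorffEdist, EMetric.hausdorffEdist_comm] at hdne)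
          _ ≤ infDist (γ x) E + 1/(k+1) := by
              rw [hausdorffDist_comm]
              exact add_le_add_right (hdreal.trans (min_le_right _ _)) _
      exact ENNReal.ofReal_le_ofReal (mul_le_mul_of_nonneg_left (hgx ▸ hfr) hA0.le)
  choose g hg0 hg1 hglip hgtot hgcig using hcurve
  -- Arzelà–Ascoli
  haveI : CompactSpace ↥(Icc (0:ℝ) 1) := isCompact_iff_compactSpace.mp isCompact_Icc
  set x₀ : ↥(Icc (0:ℝ) 1) := ⟨0, h0S⟩ with hx₀def
  set Gb : ℕ → BoundedContinuousFunction ↥(Icc (0:ℝ) 1) ℂ :=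
    fun k => BoundedContinuousFunction.mkOfCompact
      ⟨fun x => g k x, ((hglip k).to_restrict).continuous⟩ with hGbdef
  set 𝒜 : Set (BoundedContinuousFunction ↥(Icc (0:ℝ) 1) ℂ) :=
    {F | LipschitzWith K ⇑F ∧ F x₀ = a} with h𝒜def
  have hGmem : ∀ k, Gb k ∈ 𝒜 := by
    intro k
    refine ⟨(hglip k).to_restrict, ?_⟩
    show g k 0 = a
    exact hg0 k
  have hclosed : IsClosed 𝒜 := by
    have heq : 𝒜 = (⋂ (x : ↥(Icc (0:ℝ) 1)) (y : ↥(Icc (0:ℝ) 1)),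
        {F : BoundedContinuousFunction ↥(Icc (0:ℝ) 1) ℂ |
          dist (F x) (F y) ≤ (K:ℝ) * dist x y}) ∩
        {F : BoundedContinuousFunction ↥(Icc (0:ℝ) 1) ℂ | F x₀ = a} := by
      ext F
      simp only [h𝒜def, mem_setOf_eq, mem_inter_iff, mem_iInter, lipschitzWith_iff_dist_le_mul]
    rw [heq]
    refine IsClosed.inter (isClosed_iInter fun x => isClosed_iInter fun y => ?_) ?_
    · exact isClosed_le
        (((BoundedContinuousFunction.lipschitz_eval_const x).continuous.dist
          (BoundedContinuousFunction.lipschitz_eval_const y).continuous)) continuous_const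
    · exact isClosed_eq (BoundedContinuousFunction.lipschitz_eval_const _).continuous continuous_const
  have hins : ∀ (F : BoundedContinuousFunction ↥(Icc (0:ℝ) 1) ℂ) (x : ↥(Icc (0:ℝ) 1)),
      F ∈ 𝒜 → F x ∈ closedBall a K := by
    rintro F x ⟨hFlip, hF0⟩
    rw [mem_closedBall]
    have h1 : dist (F x) (F x₀) ≤ (K:ℝ) * dist x x₀ :=
      lipschitzWith_iff_dist_le_mul.1 hFlip x x₀
    have h2 : dist x x₀ ≤ 1 := by
      have hx1 := x.2.1
      have hx2 := x.2.2
      rw [Subtype.dist_eq, Real.dist_eq, hx₀def]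
      rw [abs_of_nonneg (by simpa using hx1)]
      simpa using hx2
    calc dist (F x) a = dist (F x) (F x₀) := by rw [hF0]
      _ ≤ (K:ℝ) * dist x x₀ := h1
      _ ≤ (K:ℝ) * 1 := by
          exact mul_le_mul_of_nonneg_left h2 K.coe_nonneg
      _ = K := mul_one _
  have hequi : Equicontinuous ((↑) : 𝒜 → ↥(Icc (0:ℝ) 1) → ℂ) := by
    refine Metric.equicontinuous_of_continuity_modulus (fun d => (K:ℝ) * d) ?_ _ ?_
    · have : Continuous fun d : ℝ => (K:ℝ) * d := continuous_const.mul continuous_id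
      simpa using this.tendsto 0
    · rintro x y ⟨F, hFlip, _⟩
      exact lipschitzWith_iff_dist_le_mul.1 hFlip x y
  have hcompact : IsCompact 𝒜 :=
    BoundedContinuousFunction.arzela_ascoli₂ (closedBall a K) (isCompact_closedBall a K) 𝒜 hclosed hins hequi
  obtain ⟨F, hF𝒜, σ, hσmono, hσtend⟩ := hcompact.tendsto_subseq hGmem
  -- limit curve
  set γlim : ℝ → ℂ := fun t => F (projIcc 0 1 zero_le_one t) with hγlimdef
  have hγlim_eq : ∀ t (ht : t ∈ Icc (0:ℝ) 1), γlim t = F ⟨t, ht⟩ := by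
    intro t ht
    rw [hγlimdef]
    simp only [projIcc_of_mem zero_le_one ht]
  have hpt : ∀ t ∈ Icc (0:ℝ) 1, Tendsto (fun k => g (σ k) t) atTop (𝓝 (γlim t)) := by
    intro t ht
    rw [hγlim_eq t ht]
    have := ((BoundedContinuousFunction.lipschitz_eval_const
      (⟨t, ht⟩ : ↥(Icc (0:ℝ) 1))).continuous).tendsto F
    exact this.comp hσtend
  have hcont : ContinuousOn γlim (Icc 0 1) :=
    (F.continuous.comp continuous_projIcc).continuousOn
  have hlim0 : γlim 0 = a := by
    have h1 : Tendsto (fun _ : ℕ => a) atTop (𝓝 (γlim 0)) := by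
      have := hpt 0 h0S
      simpa [hg0] using this
    exact (tendsto_nhds_unique h1 tendsto_const_nhds)
  have hlim1 : γlim 1 = b := by
    have h1 : Tendsto (fun _ : ℕ => b) atTop (𝓝 (γlim 1)) := by
      have := hpt 1 h1S
      simpa [hg1] using this
    exact (tendsto_nhds_unique h1 tendsto_const_nhds)
  have htend0 : Tendsto (fun k => 1/((σ k:ℝ)+1)) atTop (𝓝 0) := by
    refine squeeze_zero (fun k => by positivity) (fun k => ?_)
      tendsto_one_div_add_atTop_nhds_zero_nat
    refine one_div_le_one_div_of_le (by positivity) ?_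
    exact add_le_add_left (Nat.cast_le.2 hσmono.le_apply) 1
  have hRtend : ∀ t ∈ Icc (0:ℝ) 1,
      Tendsto (fun k => A * (infDist (g (σ k) t) E + 1/((σ k:ℝ)+1))) atTop
        (𝓝 (A * infDist (γlim t) E)) := by
    intro t ht
    have h1 : Tendsto (fun k => infDist (g (σ k) t) E) atTop (𝓝 (infDist (γlim t) E)) :=
      ((continuous_infDist_pt E).tendsto (γlim t)).comp (hpt t ht)
    have := (h1.add htend0).const_mul A
    simpa using this
  -- the limit curve avoids E
  have hmaps : MapsTo γlim (Icc 0 1) Eᶜ := by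
    intro t ht
    have hreal : ∀ k, min (dist a (g (σ k) t)) (dist (g (σ k) t) b)
        ≤ A * (infDist (g (σ k) t) E + 1/((σ k:ℝ)+1)) := by
      intro k
      have h1 : ENNReal.ofReal (dist a (g (σ k) t)) ≤ eVariationOn (g (σ k)) (Icc 0 t) := by
        rw [← hg0 (σ k), ← edist_dist]
        exact eVariationOn.edist_le _ ⟨le_rfl, ht.1⟩ ⟨ht.1, le_rfl⟩
      have h2 : ENNReal.ofReal (dist (g (σ k) t) b) ≤ eVariationOn (g (σ k)) (Icc t 1) := by
        rw [← hg1 (σ k), ← edist_dist]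
        exact eVariationOn.edist_le _ ⟨le_rfl, ht.2⟩ ⟨ht.2, le_rfl⟩
      have h3 : ENNReal.ofReal (min (dist a (g (σ k) t)) (dist (g (σ k) t) b))
          ≤ ENNReal.ofReal (A * (infDist (g (σ k) t) E + 1/((σ k:ℝ)+1))) := by
        have hmin : ENNReal.ofReal (min (dist a (g (σ k) t)) (dist (g (σ k) t) b))
            = min (ENNReal.ofReal (dist a (g (σ k) t)))
                (ENNReal.ofReal (dist (g (σ k) t) b)) := by
          rcases le_total (dist a (g (σ k) t)) (dist (g (σ k) t) b) with h | h
          · rw [min_eq_left h, min_eq_left (ENNReal.ofReal_le_ofReal h)]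
          · rw [min_eq_right h, min_eq_right (ENNReal.ofReal_le_ofReal h)]
        rw [hmin]
        have hcig := hgcig (σ k) t ht
        have : 1/((σ k : ℝ)+1) = 1/((σ k : ℕ) + 1 : ℝ) := by norm_num
        refine (min_le_min h1 h2).trans (hcig.trans (le_of_eq ?_))
        norm_num
      rw [ENNReal.ofReal_le_ofReal_iff
        (mul_nonneg hA0.le (add_nonneg infDist_nonneg (by positivity)))] at h3
      exact h3
    have hL : Tendsto (fun k => min (dist a (g (σ k) t)) (dist (g (σ k) t) b)) atTop
        (𝓝 (min (dist a (γlim t)) (dist (γlim t) b))) :=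
      (tendsto_const_nhds.dist (hpt t ht)).min ((hpt t ht).dist tendsto_const_nhds)
    have hfin : min (dist a (γlim t)) (dist (γlim t) b) ≤ A * infDist (γlim t) E :=
      le_of_tendsto_of_tendsto' hL (hRtend t ht) hreal
    intro htE
    rw [infDist_zero_of_mem htE, mul_zero] at hfin
    rcases min_le_iff.1 hfin with h | h
    · have : a = γlim t := dist_le_zero.1 h
      exact ha (this ▸ htE)
    · have : γlim t = b := dist_le_zero.1 h
      exact hb (this ▸ htE)
  -- frontier facts
  have hfrne : (frontier E).Nonempty := by
    by_contra hfr
    rw [not_nonempty_iff_eq_empty] at hfr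
    rcases isClopen_iff.1 (isClopen_iff_frontier_eq_empty.mpr hfr) with h | h
    · exact hEne.ne_empty h
    · exact ha (h ▸ (mem_univ a))
  have hfrontier : ∀ x : ℂ, ENNReal.ofReal (A * infDist x E)
      ≤ ENNReal.ofReal (A * infDist x (frontier Eᶜ)) := by
    intro x
    refine ENNReal.ofReal_le_ofReal (mul_le_mul_of_nonneg_left ?_ hA0.le)
    rw [frontier_compl]
    exact infDist_le_infDist_of_subset hE.isClosed.frontier_subset hfrne
  refine ⟨γlim, ⟨hcont, hmaps, ?_, ?_⟩, hlim0, hlim1⟩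
  · -- total variation
    rw [hlim0, hlim1]
    refine le_of_forall_lt fun v hv => ?_
    have hev := eVariationOn.lowerSemicontinuous_aux
      (F := fun k => g (σ k)) (p := atTop) (f := γlim) (s := Icc 0 1) hpt hv
    obtain ⟨k, hk⟩ := hev.exists
    exact hk.trans_le (hgtot (σ k))
  · -- cigar condition
    intro t ht
    refine le_trans ?_ (hfrontier (γlim t))
    by_contra hcon
    push_neg at hcon
    obtain ⟨v, hv1, hv2⟩ := exists_between hcon
    rw [lt_min_iff] at hv2
    have hptL : ∀ x ∈ Icc (0:ℝ) t, Tendsto (fun k => g (σ k) x) atTop (𝓝 (γlim x)) :=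
      fun x hx => hpt x ⟨hx.1, hx.2.trans ht.2⟩
    have hptR : ∀ x ∈ Icc t 1, Tendsto (fun k => g (σ k) x) atTop (𝓝 (γlim x)) :=
      fun x hx => hpt x ⟨ht.1.trans hx.1, hx.2⟩
    have hev1 := eVariationOn.lowerSemicontinuous_aux
      (F := fun k => g (σ k)) (p := atTop) (f := γlim) (s := Icc 0 t) hptL hv2.1
    have hev2 := eVariationOn.lowerSemicontinuous_aux
      (F := fun k => g (σ k)) (p := atTop) (f := γlim) (s := Icc t 1) hptR hv2.2
    have hDtend : Tendsto
        (fun k => ENNReal.ofReal (A * (infDist (g (σ k) t) E + 1/((σ k:ℝ)+1)))) atTop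
        (𝓝 (ENNReal.ofReal (A * infDist (γlim t) E))) :=
      (ENNReal.continuous_ofReal.tendsto _).comp (hRtend t ht)
    have hev3 := hDtend.eventually_lt_const hv1
    obtain ⟨k, h1, h2, h3⟩ := (hev1.and (hev2.and hev3)).exists
    have hcigk := hgcig (σ k) t ht
    have : v < ENNReal.ofReal (A * (infDist (g (σ k) t) E + 1/((σ k:ℝ)+1))) := by
      refine lt_of_lt_of_le (lt_min h1 h2) (le_trans hcigk (le_of_eq ?_))
      norm_num
    exact absurd (this.trans h3) (lt_irrefl v)

/-- Limits of uniform domains: if `A`-uniform domains `Ω_n ⊆ ℂ` have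
complements converging in the Hausdorff sense to a compact set `E`, then `ℂ \ E` is an
`A`-uniform domain (in particular connected). -/
theorem statement_9 (A : ℝ) (hA : 1 ≤ A) (Ωs : ℕ → Set ℂ)
    (hunif : ∀ n, IsUniformDomain A (Ωs n))
    (E : Set ℂ) (hE : IsCompact E)
    (hconv : Tendsto (fun n => EMetric.hausdorffEdist (Ωs n)ᶜ E) atTop (nhds 0)) :
    IsUniformDomain A Eᶜ := by
  rcases E.eq_empty_or_nonempty with rfl | hEne
  · obtain ⟨N, hN⟩ := (hconv.eventually (gt_mem_nhds (by norm_num : (0:ℝ≥0∞) < 1))).exists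
    have hcompl : (Ωs N)ᶜ = ∅ := by
      by_contra hne
      rw [← Ne, ← nonempty_iff_ne_empty] at hne
      rw [EMetric.hausdorffEdist, EMetric.hausdorffEdist_empty hne] at hN
      exact absurd hN (by simp)
    have hΩ : Ωs N = univ := by rwa [compl_empty_iff] at hcompl
    rw [compl_empty, ← hΩ]
    exact hunif N
  · have hcurve := fun {a b : ℂ} (ha : a ∈ Eᶜ) (hb : b ∈ Eᶜ) =>
      exists_unif_curve A hA Ωs hunif E hE hconv hEne ha hb
    obtain ⟨z, hz⟩ : ∃ z, z ∈ Eᶜ := by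
      by_contra hc
      push_neg at hc
      have : E = univ := by
        ext x
        simpa using not_not.1 (fun hx => (hc x) hx)
      exact hE.ne_univ this
    refine ⟨hE.isClosed.isOpen_compl, ⟨⟨z, hz⟩, ?_⟩, ?_⟩
    · refine isPreconnected_of_forall_pair ?_
      intro x hx y hy
      obtain ⟨γ, ⟨hγcont, hγmaps, _, _⟩, hγ0, hγ1⟩ := hcurve hx hy
      exact ⟨γ '' Icc 0 1, hγmaps.image_subset, ⟨0, ⟨le_rfl, zero_le_one⟩, hγ0⟩,
        ⟨1, ⟨zero_le_one, le_rfl⟩, hγ1⟩, isPreconnected_Icc.image γ hγcont⟩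
    · intro a ha b hb
      exact hcurve ha hb
end
end

section
/- Let Ω ⊂ Ĉ be a domain with ∞ ∉ Ω whose boundary contains at least two points, and let D = dist_e(0, Ĉ \ Ω). Then the Euclidean and spherical quasihyperbolic metrics on Ω satisfy (π√2)⁻¹ · k^e_Ω ≤ k^σ_Ω ≤ 3(2 + D) · k^e_Ω. -/
open Set Metric Filter Topology
open scoped ENNReal

noncomputable section

/-- The spherical metric between two finite points of the Riemann sphere. -/
def sphDistC (z w : ℂ) : ℝ :=
  2 * Real.arcsin (‖z - w‖ /
    (Real.sqrt (1 + ‖z‖ ^ 2) * Real.sqrt (1 + ‖w‖ ^ 2)))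

/-- The spherical distance from `z ∈ ℂ` to `Ĉ \ Ω` for a domain `Ω ⊆ ℂ` (so `∞ ∉ Ω`). -/
def sphDistToCompl (Ω : Set ℂ) (z : ℂ) : ℝ :=
  min (2 * Real.arcsin (1 / Real.sqrt (1 + ‖z‖ ^ 2))) (sInf (sphDistC z '' Ωᶜ))

/-- The distance obtained by integrating a conformal density `ρ` along smooth curves in `Ω`. -/
def qhDist (ρ : ℂ → ℝ) (Ω : Set ℂ) (x y : ℂ) : ℝ :=
  sInf {L : ℝ | ∃ γ : ℝ → ℂ, γ 0 = x ∧ γ 1 = y ∧ Set.MapsTo γ (Set.Icc 0 1) Ω ∧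
    ContDiffOn ℝ 1 γ (Set.Icc 0 1) ∧
    L = ∫ t in (0:ℝ)..1, ρ (γ t) * ‖derivWithin γ (Set.Icc 0 1) t‖}

open Real

lemma one_le_s (z : ℂ) : 1 ≤ Real.sqrt (1 + ‖z‖ ^ 2) := by
  have h := Real.sqrt_le_sqrt (show (1:ℝ) ≤ 1 + ‖z‖ ^ 2 by
    nlinarith [sq_nonneg (‖z‖)])
  simpa using h

lemma s_sq (z : ℂ) : Real.sqrt (1 + ‖z‖ ^ 2) ^ 2 = 1 + ‖z‖ ^ 2 :=
  Real.sq_sqrt (by positivity)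

lemma abs_le_s (z : ℂ) : ‖z‖ ≤ Real.sqrt (1 + ‖z‖ ^ 2) := by
  nlinarith [s_sq z, Real.sqrt_nonneg (1 + ‖z‖ ^ 2), norm_nonneg z,
    sq_nonneg (Real.sqrt (1 + ‖z‖ ^ 2) - ‖z‖)]

lemma s_lip (z w : ℂ) : Real.sqrt (1 + ‖z‖ ^ 2) ≤
    Real.sqrt (1 + ‖w‖ ^ 2) + ‖z - w‖ := by
  have ht : (0:ℝ) ≤ ‖z - w‖ := norm_nonneg _
  have hz : ‖z‖ ≤ ‖w‖ + ‖z - w‖ := by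
    calc ‖z‖ = ‖w + (z - w)‖ := by ring_nf
      _ ≤ ‖w‖ + ‖z - w‖ := norm_add_le _ _
  have hw : ‖w‖ ≤ Real.sqrt (1 + ‖w‖ ^ 2) := abs_le_s w
  have h1 : 1 + ‖z‖ ^ 2 ≤
      (Real.sqrt (1 + ‖w‖ ^ 2) + ‖z - w‖) ^ 2 := by
    nlinarith [s_sq w, norm_nonneg z, norm_nonneg w]
  calc Real.sqrt (1 + ‖z‖ ^ 2) ≤
      Real.sqrt ((Real.sqrt (1 + ‖w‖ ^ 2) + ‖z - w‖) ^ 2) :=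
        Real.sqrt_le_sqrt h1
    _ = _ := Real.sqrt_sq (by positivity)

lemma chordal_le_one (z w : ℂ) : ‖z - w‖ ≤
    Real.sqrt (1 + ‖z‖ ^ 2) * Real.sqrt (1 + ‖w‖ ^ 2) := by
  have hz : ‖z - w‖ ≤ ‖z‖ + ‖w‖ := by
    simpa using norm_sub_le z w
  have key : (‖z‖ + ‖w‖) ^ 2 ≤
      (Real.sqrt (1 + ‖z‖ ^ 2) * Real.sqrt (1 + ‖w‖ ^ 2)) ^ 2 := by
    rw [mul_pow, s_sq z, s_sq w]
    nlinarith [sq_nonneg (1 - ‖z‖ * ‖w‖)]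
  have h2 : ‖z‖ + ‖w‖ ≤
      Real.sqrt (1 + ‖z‖ ^ 2) * Real.sqrt (1 + ‖w‖ ^ 2) := by
    nlinarith [norm_nonneg z, norm_nonneg w,
      mul_nonneg (Real.sqrt_nonneg (1 + ‖z‖ ^ 2))
        (Real.sqrt_nonneg (1 + ‖w‖ ^ 2))]
  linarith

lemma le_arcsin' {t : ℝ} (h0 : 0 ≤ t) (h1 : t ≤ 1) : t ≤ Real.arcsin t := by
  have := Real.sin_le (Real.arcsin_nonneg.2 h0)
  rwa [Real.sin_arcsin (by linarith) h1] at this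

lemma arcsin_le' {t : ℝ} (h0 : 0 ≤ t) (h1 : t ≤ 1) : Real.arcsin t ≤ π / 2 * t := by
  have h := Real.mul_le_sin (Real.arcsin_nonneg.2 h0) (Real.arcsin_le_pi_div_two t)
  rw [Real.sin_arcsin (by linarith) h1] at h
  have hπ : 0 < π := Real.pi_pos
  rw [div_mul_eq_mul_div, div_le_iff₀ hπ] at h
  linarith [h]

lemma sphDistC_nonneg (z w : ℂ) : 0 ≤ sphDistC z w := by
  unfold sphDistC
  have h : (0:ℝ) ≤ ‖z - w‖ /
      (Real.sqrt (1 + ‖z‖ ^ 2) * Real.sqrt (1 + ‖w‖ ^ 2)) := by positivity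
  linarith [Real.arcsin_nonneg.2 h]

lemma q_mem (z w : ℂ) : ‖z - w‖ /
    (Real.sqrt (1 + ‖z‖ ^ 2) * Real.sqrt (1 + ‖w‖ ^ 2)) ∈ Icc (0:ℝ) 1 := by
  constructor
  · positivity
  · rw [div_le_one (by nlinarith [one_le_s z, one_le_s w])]
    exact chordal_le_one z w

lemma sphDistC_le_q (z w : ℂ) : sphDistC z w ≤ π * (‖z - w‖ /
    (Real.sqrt (1 + ‖z‖ ^ 2) * Real.sqrt (1 + ‖w‖ ^ 2))) := by
  have h := arcsin_le' (q_mem z w).1 (q_mem z w).2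
  unfold sphDistC; linarith

lemma q_le_sphDistC (z w : ℂ) : 2 * (‖z - w‖ /
    (Real.sqrt (1 + ‖z‖ ^ 2) * Real.sqrt (1 + ‖w‖ ^ 2))) ≤ sphDistC z w := by
  have h := le_arcsin' (q_mem z w).1 (q_mem z w).2
  unfold sphDistC; linarith

lemma up_bound (Ω : Set ℂ) (hΩo : IsOpen Ω) (hne : Ωᶜ.Nonempty) (z : ℂ) :
    (1 + ‖z‖ ^ 2) * sphDistToCompl Ω z ≤
      2 * π * Real.sqrt 2 * infDist z Ωᶜ := by
  set a := Real.sqrt (1 + ‖z‖ ^ 2) with ha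
  set d := infDist z Ωᶜ with hd
  have ha1 : 1 ≤ a := one_le_s z
  have ha0 : 0 < a := lt_of_lt_of_le one_pos ha1
  have hasq : a ^ 2 = 1 + ‖z‖ ^ 2 := s_sq z
  have hd0 : 0 ≤ d := infDist_nonneg
  have hr1 : (1:ℝ) ≤ Real.sqrt 2 := by
    nlinarith [Real.sq_sqrt (show (0:ℝ) ≤ 2 by norm_num), Real.sqrt_nonneg 2]
  have hr2 : Real.sqrt 2 ^ 2 = 2 := Real.sq_sqrt (by norm_num)
  have hπ : 0 < π := Real.pi_pos
  have hbdd : BddBelow (sphDistC z '' Ωᶜ) := ⟨0, by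
    rintro v ⟨w, _, rfl⟩; exact sphDistC_nonneg z w⟩
  rcases le_or_gt a (2 * Real.sqrt 2 * d) with hcase | hcase
  · -- use distance to infinity
    have hS : sphDistToCompl Ω z ≤ 2 * Real.arcsin (1 / a) := min_le_left _ _
    have harc : Real.arcsin (1 / a) ≤ π / 2 * (1 / a) :=
      arcsin_le' (by positivity) (by rw [div_le_one ha0]; exact ha1)
    have h1 : (1 + ‖z‖ ^ 2) * sphDistToCompl Ω z ≤ a ^ 2 * (2 * (π / 2 * (1 / a))) := by
      rw [hasq] at *
      nlinarith [sq_nonneg a]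
    have h2 : a ^ 2 * (2 * (π / 2 * (1 / a))) = π * a := by
      field_simp
    rw [h2] at h1
    calc (1 + ‖z‖ ^ 2) * sphDistToCompl Ω z ≤ π * a := h1
      _ ≤ π * (2 * Real.sqrt 2 * d) := by nlinarith
      _ = 2 * π * Real.sqrt 2 * d := by ring
  · -- use nearest point
    obtain ⟨w, hwK, hwd⟩ := (hΩo.isClosed_compl).exists_infDist_eq_dist hne z
    rw [← hd] at hwd
    have hzw : ‖z - w‖ = d := by rw [hwd, Complex.dist_eq]
    set b := Real.sqrt (1 + ‖w‖ ^ 2) with hb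
    have hb1 : 1 ≤ b := one_le_s w
    have hb0 : 0 < b := lt_of_lt_of_le one_pos hb1
    have hS : sphDistToCompl Ω z ≤ sphDistC z w :=
      le_trans (min_le_right _ _) (csInf_le hbdd ⟨w, hwK, rfl⟩)
    have hσ : sphDistC z w ≤ π * (d / (a * b)) := by
      have := sphDistC_le_q z w
      rwa [hzw] at this
    have hab : a ≤ b + d := by
      have := s_lip z w
      rwa [hzw] at this
    -- a < 2 √2 b
    have hkey : a ≤ 2 * Real.sqrt 2 * b := by nlinarith
    have h1 : (1 + ‖z‖ ^ 2) * sphDistToCompl Ω z ≤ a ^ 2 * (π * (d / (a * b))) := by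
      rw [← hasq]
      nlinarith [le_trans hS hσ, sq_nonneg a]
    have h2 : a ^ 2 * (π * (d / (a * b))) = π * d * a / b := by
      field_simp
    rw [h2] at h1
    have h3 : π * d * a / b ≤ 2 * π * Real.sqrt 2 * d := by
      rw [div_le_iff₀ hb0]
      nlinarith [mul_nonneg (mul_nonneg hπ.le hd0) (sub_nonneg.2 hkey)]
    linarith

lemma low_bound (Ω : Set ℂ) (hne : Ωᶜ.Nonempty) (z : ℂ) :
    2 * infDist z Ωᶜ ≤ 3 * (2 + infDist 0 Ωᶜ) *
      ((1 + ‖z‖ ^ 2) * sphDistToCompl Ω z) := by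
  set a := Real.sqrt (1 + ‖z‖ ^ 2) with ha
  set d := infDist z Ωᶜ with hd
  set D := infDist 0 Ωᶜ with hDdef
  have ha1 : 1 ≤ a := one_le_s z
  have ha0 : 0 < a := lt_of_lt_of_le one_pos ha1
  have hasq : a ^ 2 = 1 + ‖z‖ ^ 2 := s_sq z
  have hd0 : 0 ≤ d := infDist_nonneg
  have hD0 : 0 ≤ D := infDist_nonneg
  have hdD : d ≤ D + ‖z‖ := by
    have h := infDist_le_infDist_add_dist (x := z) (y := 0) (s := Ωᶜ)
    rwa [dist_zero_right] at h
  have hza : ‖z‖ ≤ a := abs_le_s z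
  have hda : d ≤ (2 + D) * a := by nlinarith
  have hC0 : (0:ℝ) < 3 * (2 + D) := by nlinarith
  rcases min_cases (2 * Real.arcsin (1 / a)) (sInf (sphDistC z '' Ωᶜ)) with ⟨hmin, _⟩ | ⟨hmin, _⟩
  all_goals rw [sphDistToCompl, hmin]
  · -- infinity branch : min = 2 arcsin (1/a)
    have harc : 1 / a ≤ Real.arcsin (1 / a) :=
      le_arcsin' (by positivity) (by rw [div_le_one ha0]; exact ha1)
    have h1 : 2 * a ≤ (1 + ‖z‖ ^ 2) * (2 * Real.arcsin (1 / a)) := by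
      rw [← hasq]
      have : a ^ 2 * (2 * (1/a)) = 2 * a := by field_simp
      nlinarith [sq_nonneg a]
    nlinarith
  · -- finite branch
    have hlow : d / ((2 + D) * a ^ 2) ≤ sInf (sphDistC z '' Ωᶜ) := by
      apply le_csInf (hne.image _)
      rintro v ⟨w, hwK, rfl⟩
      set b := Real.sqrt (1 + ‖w‖ ^ 2) with hb
      have hb1 : 1 ≤ b := one_le_s w
      have hb0 : 0 < b := lt_of_lt_of_le one_pos hb1
      have ht0 : 0 ≤ ‖z - w‖ := norm_nonneg _
      have hdt : d ≤ ‖z - w‖ := by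
        rw [hd, ← Complex.dist_eq]; exact infDist_le_dist_of_mem hwK
      have hba : b ≤ a + ‖z - w‖ := by
        have h := s_lip w z
        rwa [norm_sub_rev] at h
      have hq := q_le_sphDistC z w
      calc d / ((2 + D) * a ^ 2) ≤ 2 * (‖z - w‖ / (a * b)) := by
            rw [mul_div_assoc', div_le_div_iff₀ (by positivity) (by positivity)]
            nlinarith [mul_le_mul_of_nonneg_right hda (mul_nonneg ha0.le ht0),
              mul_le_mul_of_nonneg_left hba (mul_nonneg hd0 ha0.le),
              mul_nonneg (sub_nonneg.2 hdt) (mul_nonneg ha0.le ha0.le),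
              mul_nonneg (mul_nonneg (by linarith : (0:ℝ) ≤ 2 + D) (mul_nonneg ha0.le ha0.le)) ht0]
        _ ≤ sphDistC z w := hq
    have h2 : d / ((2 + D) * a ^ 2) * ((2 + D) * a ^ 2) = d := by
      field_simp
    have h3 : d ≤ sInf (sphDistC z '' Ωᶜ) * ((2 + D) * a ^ 2) := by
      rw [← h2]
      exact mul_le_mul_of_nonneg_right hlow (by positivity)
    rw [← hasq]
    nlinarith [h3]

lemma continuous_sphDistC_fst (w : ℂ) : Continuous fun z => sphDistC z w := by
  unfold sphDistC
  apply Continuous.mul continuous_const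
  apply Real.continuous_arcsin.comp
  apply Continuous.div
  · exact continuous_norm.comp (continuous_id.sub continuous_const)
  · exact ((Real.continuous_sqrt.comp (by continuity)).mul continuous_const)
  · intro z
    have := one_le_s z
    have := one_le_s w
    positivity

lemma sphDistToCompl_measurable (Ω : Set ℂ) (hne : Ωᶜ.Nonempty) :
    Measurable (sphDistToCompl Ω) := by
  unfold sphDistToCompl
  apply Measurable.min
  · apply Measurable.mul measurable_const
    apply Real.continuous_arcsin.measurable.comp
    apply Measurable.div measurable_const
    exact (Real.continuous_sqrt.comp (by continuity)).measurable
  · have husc : UpperSemicontinuous fun z => sInf (sphDistC z '' Ωᶜ) := by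
      intro x y hxy
      obtain ⟨v, ⟨w, hwK, rfl⟩, hv⟩ := exists_lt_of_csInf_lt (hne.image _) hxy
      have hopen : IsOpen {z : ℂ | sphDistC z w < y} :=
        isOpen_lt (continuous_sphDistC_fst w) continuous_const
      filter_upwards [hopen.mem_nhds hv] with z hz
      have hbdd : BddBelow (sphDistC z '' Ωᶜ) := ⟨0, by
        rintro v ⟨u, _, rfl⟩; exact sphDistC_nonneg z u⟩
      exact lt_of_le_of_lt (csInf_le hbdd ⟨w, hwK, rfl⟩) hz
    exact husc.measurable

/-- Comparison of the Euclidean and spherical quasihyperbolic metrics of a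
plane domain `Ω` (viewed in `Ĉ` with `∞ ∉ Ω`) whose boundary has at least two points:
`(π√2)⁻¹ k^e_Ω ≤ k^σ_Ω ≤ 3(2+D) k^e_Ω` where `D = dist_e(0, Ĉ \ Ω)`. -/
theorem statement_10 (Ω : Set ℂ) (hΩo : IsOpen Ω) (hΩc : IsConnected Ω)
    (hne : Ωᶜ.Nonempty) (D : ℝ) (hD : D = Metric.infDist 0 Ωᶜ)
    (x y : ℂ) (hx : x ∈ Ω) (hy : y ∈ Ω) :
    (Real.pi * Real.sqrt 2)⁻¹ * qhDist (fun z => (Metric.infDist z Ωᶜ)⁻¹) Ω x y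
        ≤ qhDist (fun z => 2 / ((1 + ‖z‖ ^ 2) * sphDistToCompl Ω z)) Ω x y ∧
      qhDist (fun z => 2 / ((1 + ‖z‖ ^ 2) * sphDistToCompl Ω z)) Ω x y
        ≤ 3 * (2 + D) * qhDist (fun z => (Metric.infDist z Ωᶜ)⁻¹) Ω x y := by
  have hD0 : 0 ≤ D := hD ▸ infDist_nonneg
  have hC0 : (0:ℝ) < 3 * (2 + D) := by nlinarith
  have hπ : 0 < π := Real.pi_pos
  have hr0 : 0 < Real.sqrt 2 := by positivity
  have hinv0 : 0 ≤ (π * Real.sqrt 2)⁻¹ := by positivity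
  set ρe : ℂ → ℝ := fun z => (infDist z Ωᶜ)⁻¹ with hρe
  set ρσ : ℂ → ℝ := fun z => 2 / ((1 + ‖z‖ ^ 2) * sphDistToCompl Ω z) with hρσ
  have hd_pos : ∀ z ∈ Ω, 0 < infDist z Ωᶜ := fun z hz =>
    ((hΩo.isClosed_compl).notMem_iff_infDist_pos hne).1 (by simpa using hz)
  have hY_pos : ∀ z ∈ Ω, 0 < (1 + ‖z‖ ^ 2) * sphDistToCompl Ω z := by
    intro z hz
    have hl := low_bound Ω hne z
    rw [← hD] at hl
    nlinarith [hd_pos z hz]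
  have hC1 : ∀ z ∈ Ω, (π * Real.sqrt 2)⁻¹ * ρe z ≤ ρσ z := by
    intro z hz
    have hY := hY_pos z hz
    have hdp := hd_pos z hz
    rw [hρσ]
    simp only
    rw [le_div_iff₀ hY]
    have hub := up_bound Ω hΩo hne z
    calc (π * Real.sqrt 2)⁻¹ * ρe z * ((1 + ‖z‖ ^ 2) * sphDistToCompl Ω z)
        ≤ (π * Real.sqrt 2)⁻¹ * ρe z * (2 * π * Real.sqrt 2 * infDist z Ωᶜ) := by
          apply mul_le_mul_of_nonneg_left hub
          have : 0 ≤ ρe z := by rw [hρe]; positivity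
          positivity
      _ = 2 := by
          rw [hρe]
          simp only
          field_simp
  have hC2 : ∀ z ∈ Ω, ρσ z ≤ 3 * (2 + D) * ρe z := by
    intro z hz
    have hY := hY_pos z hz
    have hdp := hd_pos z hz
    rw [hρσ, hρe]
    simp only
    rw [div_le_iff₀ hY]
    have hl := low_bound Ω hne z
    rw [← hD] at hl
    have hcancel : infDist z Ωᶜ * (infDist z Ωᶜ)⁻¹ = 1 := mul_inv_cancel₀ (ne_of_gt hdp)
    nlinarith [mul_le_mul_of_nonneg_right hl (inv_nonneg.2 hdp.le)]
  -- per-curve comparison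
  have hcurve : ∀ γ : ℝ → ℂ, MapsTo γ (Icc 0 1) Ω → ContDiffOn ℝ 1 γ (Icc 0 1) →
      ((π * Real.sqrt 2)⁻¹ * (∫ t in (0:ℝ)..1, ρe (γ t) * ‖derivWithin γ (Icc 0 1) t‖)
          ≤ ∫ t in (0:ℝ)..1, ρσ (γ t) * ‖derivWithin γ (Icc 0 1) t‖)
        ∧ (∫ t in (0:ℝ)..1, ρσ (γ t) * ‖derivWithin γ (Icc 0 1) t‖)
          ≤ 3 * (2 + D) * ∫ t in (0:ℝ)..1, ρe (γ t) * ‖derivWithin γ (Icc 0 1) t‖ := by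
    intro γ hmaps hsm
    have hderiv_cont : ContinuousOn (derivWithin γ (Icc 0 1)) (Icc 0 1) :=
      hsm.continuousOn_derivWithin (uniqueDiffOn_Icc zero_lt_one) le_rfl
    have hg_cont : ContinuousOn (fun t => ρe (γ t) * ‖derivWithin γ (Icc 0 1) t‖) (Icc 0 1) := by
      apply ContinuousOn.mul
      · rw [hρe]
        apply ContinuousOn.inv₀
        · exact (continuous_infDist_pt Ωᶜ).comp_continuousOn hsm.continuousOn
        · intro t ht; exact ne_of_gt (hd_pos _ (hmaps ht))
      · exact hderiv_cont.norm
    have hg_int : IntervalIntegrable (fun t => ρe (γ t) * ‖derivWithin γ (Icc 0 1) t‖)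
        MeasureTheory.volume 0 1 := by
      apply ContinuousOn.intervalIntegrable
      rwa [uIcc_of_le zero_le_one]
    have hf_nonneg : ∀ t ∈ Icc (0:ℝ) 1, 0 ≤ ρσ (γ t) * ‖derivWithin γ (Icc 0 1) t‖ := by
      intro t ht
      have hY := (hY_pos _ (hmaps ht)).le
      rw [hρσ]
      simp only
      positivity
    have hfg : ∀ t ∈ Icc (0:ℝ) 1, ρσ (γ t) * ‖derivWithin γ (Icc 0 1) t‖
        ≤ 3 * (2 + D) * (ρe (γ t) * ‖derivWithin γ (Icc 0 1) t‖) := by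
      intro t ht
      have h := mul_le_mul_of_nonneg_right (hC2 _ (hmaps ht))
        (norm_nonneg (derivWithin γ (Icc 0 1) t))
      calc ρσ (γ t) * ‖derivWithin γ (Icc 0 1) t‖
          ≤ 3 * (2 + D) * ρe (γ t) * ‖derivWithin γ (Icc 0 1) t‖ := h
        _ = 3 * (2 + D) * (ρe (γ t) * ‖derivWithin γ (Icc 0 1) t‖) := by ring
    have hgf : ∀ t ∈ Icc (0:ℝ) 1, (π * Real.sqrt 2)⁻¹ * (ρe (γ t) * ‖derivWithin γ (Icc 0 1) t‖)
        ≤ ρσ (γ t) * ‖derivWithin γ (Icc 0 1) t‖ := by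
      intro t ht
      have h := mul_le_mul_of_nonneg_right (hC1 _ (hmaps ht))
        (norm_nonneg (derivWithin γ (Icc 0 1) t))
      calc (π * Real.sqrt 2)⁻¹ * (ρe (γ t) * ‖derivWithin γ (Icc 0 1) t‖)
          = (π * Real.sqrt 2)⁻¹ * ρe (γ t) * ‖derivWithin γ (Icc 0 1) t‖ := by ring
        _ ≤ ρσ (γ t) * ‖derivWithin γ (Icc 0 1) t‖ := h
    have hf_meas : MeasureTheory.AEStronglyMeasurable
        (fun t => ρσ (γ t) * ‖derivWithin γ (Icc 0 1) t‖)
        (MeasureTheory.volume.restrict (Icc (0:ℝ) 1)) := by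
      have hγae : AEMeasurable γ (MeasureTheory.volume.restrict (Icc (0:ℝ) 1)) :=
        hsm.continuousOn.aemeasurable measurableSet_Icc
      have h1 : AEMeasurable (fun t => sphDistToCompl Ω (γ t))
          (MeasureTheory.volume.restrict (Icc (0:ℝ) 1)) :=
        (sphDistToCompl_measurable Ω hne).comp_aemeasurable hγae
      have h2 : AEMeasurable (fun t => 1 + ‖γ t‖ ^ 2)
          (MeasureTheory.volume.restrict (Icc (0:ℝ) 1)) :=
        ((by continuity : Continuous fun z : ℂ => 1 + ‖z‖ ^ 2).measurable).comp_aemeasurable hγae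
      have h4 : AEMeasurable (fun t => ‖derivWithin γ (Icc 0 1) t‖)
          (MeasureTheory.volume.restrict (Icc (0:ℝ) 1)) :=
        hderiv_cont.norm.aemeasurable measurableSet_Icc
      have h3 : AEMeasurable (fun t => ρσ (γ t))
          (MeasureTheory.volume.restrict (Icc (0:ℝ) 1)) := by
        rw [hρσ]
        exact aemeasurable_const.div (h2.mul h1)
      exact (h3.mul h4).aestronglyMeasurable
    have hf_int : IntervalIntegrable (fun t => ρσ (γ t) * ‖derivWithin γ (Icc 0 1) t‖)
        MeasureTheory.volume 0 1 := by
      rw [intervalIntegrable_iff_integrableOn_Icc_of_le zero_le_one]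
      have hg_int' : MeasureTheory.IntegrableOn
          (fun t => 3 * (2 + D) * (ρe (γ t) * ‖derivWithin γ (Icc 0 1) t‖))
          (Icc (0:ℝ) 1) MeasureTheory.volume := by
        have h := hg_int
        rw [intervalIntegrable_iff_integrableOn_Icc_of_le zero_le_one] at h
        exact h.const_mul _
      apply MeasureTheory.Integrable.mono' hg_int' hf_meas
      filter_upwards [MeasureTheory.ae_restrict_mem measurableSet_Icc] with t ht
      rw [Real.norm_of_nonneg (hf_nonneg t ht)]
      exact hfg t ht
    constructor
    · rw [← intervalIntegral.integral_const_mul]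
      exact intervalIntegral.integral_mono_on zero_le_one (hg_int.const_mul _) hf_int hgf
    · rw [← intervalIntegral.integral_const_mul]
      exact intervalIntegral.integral_mono_on zero_le_one hf_int (hg_int.const_mul _) hfg
  -- assemble
  set Ae := {L : ℝ | ∃ γ : ℝ → ℂ, γ 0 = x ∧ γ 1 = y ∧ MapsTo γ (Icc 0 1) Ω ∧
    ContDiffOn ℝ 1 γ (Icc 0 1) ∧
    L = ∫ t in (0:ℝ)..1, ρe (γ t) * ‖derivWithin γ (Icc 0 1) t‖} with hAe_def
  set Aσ := {L : ℝ | ∃ γ : ℝ → ℂ, γ 0 = x ∧ γ 1 = y ∧ MapsTo γ (Icc 0 1) Ω ∧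
    ContDiffOn ℝ 1 γ (Icc 0 1) ∧
    L = ∫ t in (0:ℝ)..1, ρσ (γ t) * ‖derivWithin γ (Icc 0 1) t‖} with hAσ_def
  have hqe : qhDist ρe Ω x y = sInf Ae := rfl
  have hqσ : qhDist ρσ Ω x y = sInf Aσ := rfl
  rw [hqe, hqσ]
  have hbddAe : BddBelow Ae := by
    refine ⟨0, ?_⟩
    rintro L ⟨γ, h0, h1, hm, hs, rfl⟩
    apply intervalIntegral.integral_nonneg zero_le_one
    intro u hu
    have : 0 ≤ ρe (γ u) := inv_nonneg.2 infDist_nonneg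
    exact mul_nonneg this (norm_nonneg _)
  have hbddAσ : BddBelow Aσ := by
    refine ⟨0, ?_⟩
    rintro L ⟨γ, h0, h1, hm, hs, rfl⟩
    apply intervalIntegral.integral_nonneg zero_le_one
    intro u hu
    have hY := (hY_pos _ (hm hu)).le
    have : 0 ≤ ρσ (γ u) := by
      rw [hρσ]; simp only; exact div_nonneg (by norm_num) hY
    exact mul_nonneg this (norm_nonneg _)
  constructor
  · rcases eq_empty_or_nonempty Aσ with hAσ | hAσ
    · have hAe0 : Ae = ∅ := by
        rw [eq_empty_iff_forall_notMem]
        rintro L ⟨γ, h0, h1, hm, hs, rfl⟩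
        have : (∫ t in (0:ℝ)..1, ρσ (γ t) * ‖derivWithin γ (Icc 0 1) t‖) ∈ Aσ :=
          ⟨γ, h0, h1, hm, hs, rfl⟩
        rw [hAσ] at this
        exact this
      rw [hAσ, hAe0, Real.sInf_empty]
      simp
    · apply le_csInf hAσ
      rintro b ⟨γ, h0, h1, hm, hs, rfl⟩
      have hle : sInf Ae ≤ ∫ t in (0:ℝ)..1, ρe (γ t) * ‖derivWithin γ (Icc 0 1) t‖ :=
        csInf_le hbddAe ⟨γ, h0, h1, hm, hs, rfl⟩
      calc (π * Real.sqrt 2)⁻¹ * sInf Ae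
          ≤ (π * Real.sqrt 2)⁻¹ * ∫ t in (0:ℝ)..1, ρe (γ t) * ‖derivWithin γ (Icc 0 1) t‖ :=
            mul_le_mul_of_nonneg_left hle hinv0
        _ ≤ _ := (hcurve γ hm hs).1
  · rcases eq_empty_or_nonempty Ae with hAe0 | hAe0
    · have hAσ0 : Aσ = ∅ := by
        rw [eq_empty_iff_forall_notMem]
        rintro L ⟨γ, h0, h1, hm, hs, rfl⟩
        have : (∫ t in (0:ℝ)..1, ρe (γ t) * ‖derivWithin γ (Icc 0 1) t‖) ∈ Ae :=
          ⟨γ, h0, h1, hm, hs, rfl⟩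
        rw [hAe0] at this
        exact this
      rw [hAσ0, hAe0, Real.sInf_empty]
      simp
    · have h1 : sInf Aσ / (3 * (2 + D)) ≤ sInf Ae := by
        apply le_csInf hAe0
        rintro a ⟨γ, h0, h1, hm, hs, rfl⟩
        rw [div_le_iff₀ hC0]
        have hle : sInf Aσ ≤ ∫ t in (0:ℝ)..1, ρσ (γ t) * ‖derivWithin γ (Icc 0 1) t‖ :=
          csInf_le hbddAσ ⟨γ, h0, h1, hm, hs, rfl⟩
        have := (hcurve γ hm hs).2
        nlinarith
      rw [div_le_iff₀ hC0] at h1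
      linarith
end
end

section
/- For each A ≥ 1, if Ω ⊂ ℂ is an A-uniform domain, then any two points of the closure of Ω can be joined by an A-uniform curve γ : [0,1] → closure(Ω). -/
open Set Metric Filter Topology
open scoped ENNReal

noncomputable section

/-- An `A`-uniform curve with values in the closure of `Ω` (endpoints may lie on `∂Ω`). -/
def IsUniformCurveIn (A : ℝ) (Ω : Set ℂ) (γ : ℝ → ℂ) : Prop :=
  ContinuousOn γ (Set.Icc 0 1) ∧ Set.MapsTo γ (Set.Icc 0 1) (closure Ω) ∧
  eVariationOn γ (Set.Icc 0 1) ≤ ENNReal.ofReal (A * dist (γ 0) (γ 1)) ∧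
  ∀ t ∈ Set.Icc (0:ℝ) 1,
    min (eVariationOn γ (Set.Icc 0 t)) (eVariationOn γ (Set.Icc t 1))
      ≤ ENNReal.ofReal (A * Metric.infDist (γ t) (frontier Ω))

/-- Any `A`-uniform curve can be reparametrized to an `A`-uniform curve with the same
endpoints which is Lipschitz with constant `1 + A * dist (γ 0) (γ 1)`. -/
lemma evar_reparam (A : ℝ) (hA0 : 0 ≤ A) (Ω : Set ℂ) (γ : ℝ → ℂ)
    (hγ : IsUniformCurve A Ω γ) :
    ∃ Γ : ℝ → ℂ, IsUniformCurve A Ω Γ ∧ Γ 0 = γ 0 ∧ Γ 1 = γ 1 ∧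
      ∀ s ∈ Set.Icc (0:ℝ) 1, ∀ s' ∈ Set.Icc (0:ℝ) 1, s ≤ s' →
        edist (Γ s) (Γ s') ≤ ENNReal.ofReal ((1 + A * dist (γ 0) (γ 1)) * (s' - s)) := by
  obtain ⟨hcont, hmap, hvar, hcig⟩ := hγ
  set D := A * dist (γ 0) (γ 1) with hD
  have hD0 : 0 ≤ D := mul_nonneg hA0 dist_nonneg
  have hfin : eVariationOn γ (Icc 0 1) ≠ ⊤ :=
    ne_top_of_le_ne_top ENNReal.ofReal_ne_top hvar
  set φ : ℝ → ℝ := fun t => (eVariationOn γ (Icc 0 t)).toReal with hφdef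
  have hfin' : ∀ t : ℝ, t ≤ 1 → eVariationOn γ (Icc 0 t) ≠ ⊤ := fun t ht =>
    ne_top_of_le_ne_top hfin (eVariationOn.mono γ (Icc_subset_Icc le_rfl ht))
  have hφmono : ∀ t t' : ℝ, t ≤ t' → t' ≤ 1 → φ t ≤ φ t' := fun t t' h h1 =>
    ENNReal.toReal_mono (hfin' t' h1) (eVariationOn.mono γ (Icc_subset_Icc le_rfl h))
  have hφ0 : φ 0 = 0 := by
    have : (Icc (0:ℝ) 0).Subsingleton := by
      rw [Set.Icc_self]; exact Set.subsingleton_singleton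
    simp [hφdef, eVariationOn.subsingleton γ this]
  have hφnn : ∀ t, 0 ≤ φ t := fun t => ENNReal.toReal_nonneg
  set V := φ 1 with hVdef
  have hVD : V ≤ D := ENNReal.toReal_le_of_le_ofReal hD0 hvar
  have hW0 : (0:ℝ) < 1 + V := by have := hφnn 1; linarith
  -- additivity of the variation function
  have hadd : ∀ t t' : ℝ, 0 ≤ t → t ≤ t' → t' ≤ 1 →
      eVariationOn γ (Icc t t') = ENNReal.ofReal (φ t' - φ t) := by
    intro t t' h0 htt h1
    have key := eVariationOn.Icc_add_Icc γ (s := (univ : Set ℝ)) h0 htt (mem_univ t)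
    simp only [Set.univ_inter] at key
    have hf1 : eVariationOn γ (Icc 0 t) ≠ ⊤ := hfin' t (htt.trans h1)
    have hf2 : eVariationOn γ (Icc t t') ≠ ⊤ := by
      intro hc; rw [hc] at key
      exact hfin' t' h1 (by rw [← key]; simp)
    have htr : φ t + (eVariationOn γ (Icc t t')).toReal = φ t' := by
      rw [hφdef]; dsimp only
      rw [← ENNReal.toReal_add hf1 hf2, key]
    rw [← htr]
    simp only [add_sub_cancel_left]
    exact (ENNReal.ofReal_toReal hf2).symm
  -- the generalized inverse
  set S : ℝ → Set ℝ := fun σ => {t ∈ Icc (0:ℝ) 1 | t + φ t ≤ σ} with hSdef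
  set g : ℝ → ℝ := fun σ => sSup (S σ) with hgdef
  have hmemS : ∀ σ : ℝ, 0 ≤ σ → (0:ℝ) ∈ S σ := by
    intro σ hσ
    refine ⟨⟨le_rfl, zero_le_one⟩, ?_⟩
    rw [hφ0]; simpa using hσ
  have hbddS : ∀ σ : ℝ, BddAbove (S σ) := fun σ => ⟨1, fun t ht => ht.1.2⟩
  have hg0 : ∀ σ : ℝ, 0 ≤ σ → 0 ≤ g σ := fun σ hσ => le_csSup (hbddS σ) (hmemS σ hσ)
  have hg1 : ∀ σ : ℝ, 0 ≤ σ → g σ ≤ 1 := fun σ hσ =>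
    csSup_le ⟨0, hmemS σ hσ⟩ fun t ht => ht.1.2
  have hgmono : ∀ σ σ' : ℝ, 0 ≤ σ → σ ≤ σ' → g σ ≤ g σ' := fun σ σ' hσ hσσ =>
    csSup_le_csSup (hbddS σ') ⟨0, hmemS σ hσ⟩ fun t ht => ⟨ht.1, ht.2.trans hσσ⟩
  have hkey1 : ∀ σ : ℝ, 0 ≤ σ → ∀ t : ℝ, g σ < t → t ≤ 1 → σ < t + φ t := by
    intro σ hσ t hgt ht1
    by_contra hc
    push_neg at hc
    exact absurd (le_csSup (hbddS σ) ⟨⟨(hg0 σ hσ).trans hgt.le, ht1⟩, hc⟩) (not_le.2 hgt)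
  have hkey2 : ∀ σ : ℝ, 0 ≤ σ → ∀ t : ℝ, 0 ≤ t → t < g σ → t + φ t ≤ σ := by
    intro σ hσ t ht0 htg
    obtain ⟨c, hcS, htc⟩ := exists_lt_of_lt_csSup ⟨0, hmemS σ hσ⟩ htg
    have : t + φ t ≤ c + φ c :=
      add_le_add htc.le (hφmono t c htc.le hcS.1.2)
    exact this.trans hcS.2
  -- the core Lipschitz estimate
  have hlipcore : ∀ σ σ' : ℝ, 0 ≤ σ → σ ≤ σ' →
      edist (γ (g σ)) (γ (g σ')) ≤ ENNReal.ofReal (σ' - σ) := by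
    intro σ σ' hσ hσσ
    have hσ' : 0 ≤ σ' := hσ.trans hσσ
    rcases eq_or_lt_of_le (hgmono σ σ' hσ hσσ) with hab | hab
    · rw [hab, edist_self]; exact zero_le
    set a := g σ with ha
    set b := g σ' with hb
    have ha0 : 0 ≤ a := hg0 σ hσ
    have hb1 : b ≤ 1 := hg1 σ' hσ'
    have haI : a ∈ Icc (0:ℝ) 1 := ⟨ha0, (hg1 σ hσ)⟩
    have hbI : b ∈ Icc (0:ℝ) 1 := ⟨hg0 σ' hσ', hb1⟩
    have hclaim : ∀ t t' : ℝ, a < t → t ≤ t' → t' < b →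
        edist (γ t) (γ t') ≤ ENNReal.ofReal (σ' - σ) := by
      intro t t' hat htt htb
      have ht1 : t ≤ 1 := le_trans (htt.trans htb.le) hb1
      have hk1 : σ < t + φ t := hkey1 σ hσ t hat ht1
      have hk2 : t' + φ t' ≤ σ' := hkey2 σ' hσ' t' (ha0.trans (hat.le.trans htt)) htb
      have h1 : edist (γ t) (γ t') ≤ eVariationOn γ (Icc t t') :=
        eVariationOn.edist_le γ ⟨le_rfl, htt⟩ ⟨htt, le_rfl⟩
      have h2 : eVariationOn γ (Icc t t') = ENNReal.ofReal (φ t' - φ t) :=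
        hadd t t' (ha0.trans hat.le) htt (htb.le.trans hb1)
      refine h1.trans ?_
      rw [h2]
      exact ENNReal.ofReal_le_ofReal (by linarith)
    refine ENNReal.le_of_forall_pos_le_add ?_
    intro ε hε _
    have hε2 : (0:ℝ≥0∞) < (ε : ℝ≥0∞) / 2 := by
      simp [ENNReal.div_pos_iff, hε.ne']
    -- pick t near a
    have hIooIcc : Ioo a b ⊆ Icc (0:ℝ) 1 := fun u hu => ⟨ha0.trans hu.1.le, hu.2.le.trans hb1⟩
    have hta : Filter.Tendsto γ (nhdsWithin a (Ioo a b)) (nhds (γ a)) :=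
      (hcont a haI).mono_left (nhdsWithin_mono a hIooIcc)
    haveI := left_nhdsWithin_Ioo_neBot hab
    have hev1 : ∀ᶠ u in nhdsWithin a (Ioo a b),
        edist (γ u) (γ a) < (ε : ℝ≥0∞) / 2 := by
      have := hta (EMetric.ball_mem_nhds (γ a) hε2)
      filter_upwards [this] with u hu using hu
    obtain ⟨t, htd, htmem⟩ := (hev1.and eventually_mem_nhdsWithin).exists
    have htab : a < t := htmem.1
    have htb' : t < b := htmem.2
    -- pick t' near b
    have hIoo2 : Ioo t b ⊆ Icc (0:ℝ) 1 := fun u hu =>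
      ⟨(ha0.trans htab.le).trans hu.1.le, hu.2.le.trans hb1⟩
    have htb2 : Filter.Tendsto γ (nhdsWithin b (Ioo t b)) (nhds (γ b)) :=
      (hcont b hbI).mono_left (nhdsWithin_mono b hIoo2)
    haveI := right_nhdsWithin_Ioo_neBot htb'
    have hev2 : ∀ᶠ u in nhdsWithin b (Ioo t b),
        edist (γ u) (γ b) < (ε : ℝ≥0∞) / 2 := by
      have := htb2 (EMetric.ball_mem_nhds (γ b) hε2)
      filter_upwards [this] with u hu using hu
    obtain ⟨t', ht'd, ht'mem⟩ := (hev2.and eventually_mem_nhdsWithin).exists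
    calc edist (γ a) (γ b)
        ≤ edist (γ a) (γ t) + edist (γ t) (γ t') + edist (γ t') (γ b) :=
          edist_triangle4 (γ a) (γ t) (γ t') (γ b)
      _ ≤ (ε : ℝ≥0∞) / 2 + ENNReal.ofReal (σ' - σ) + (ε : ℝ≥0∞) / 2 := by
          refine add_le_add (add_le_add ?_ ?_) ht'd.le
          · rw [edist_comm]; exact htd.le
          · exact hclaim t t' htab ht'mem.1.le ht'mem.2
      _ = ENNReal.ofReal (σ' - σ) + ε := by
          rw [add_comm ((ε : ℝ≥0∞) / 2) (ENNReal.ofReal (σ' - σ)), add_assoc,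
            ENNReal.add_halves]
  -- the reparametrizing map
  set m : ℝ → ℝ := fun s => g ((1 + V) * s) with hmdef
  have hm0 : m 0 = 0 := by
    have h1 : g 0 ≤ 0 := csSup_le ⟨0, hmemS 0 le_rfl⟩ (fun t ht => by
      have h2 := ht.2; have h3 := ht.1.1; have h4 := hφnn t; linarith)
    have hg00 : g 0 = 0 := le_antisymm h1 (hg0 0 le_rfl)
    simp only [hmdef, mul_zero]
    exact hg00
  have hm1 : m 1 = 1 := by
    have hmem1 : (1:ℝ) ∈ S (1 + V) := ⟨⟨zero_le_one, le_rfl⟩, by rw [hVdef]⟩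
    have h1 : (1:ℝ) ≤ g (1 + V) := le_csSup (hbddS _) hmem1
    have hgW : g (1 + V) = 1 := le_antisymm (hg1 _ hW0.le) h1
    simp only [hmdef, mul_one]
    exact hgW
  have hmW : ∀ s : ℝ, 0 ≤ s → 0 ≤ (1 + V) * s := fun s hs => mul_nonneg hW0.le hs
  have hmmem : ∀ s : ℝ, 0 ≤ s → m s ∈ Icc (0:ℝ) 1 := fun s hs =>
    ⟨hg0 _ (hmW s hs), hg1 _ (hmW s hs)⟩
  have hmmono : ∀ s s' : ℝ, 0 ≤ s → s ≤ s' → m s ≤ m s' := fun s s' hs hss =>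
    hgmono _ _ (hmW s hs) (mul_le_mul_of_nonneg_left hss hW0.le)
  set Γ : ℝ → ℂ := γ ∘ m with hΓdef
  have hΓlip : ∀ s ∈ Icc (0:ℝ) 1, ∀ s' ∈ Icc (0:ℝ) 1, s ≤ s' →
      edist (Γ s) (Γ s') ≤ ENNReal.ofReal ((1 + D) * (s' - s)) := by
    intro s hs s' hs' hss
    have h1 : edist (Γ s) (Γ s') ≤ ENNReal.ofReal ((1 + V) * s' - (1 + V) * s) :=
      hlipcore _ _ (hmW s hs.1) (mul_le_mul_of_nonneg_left hss hW0.le)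
    refine h1.trans (ENNReal.ofReal_le_ofReal ?_)
    have heq : (1 + V) * s' - (1 + V) * s = (1 + V) * (s' - s) := by ring
    rw [heq]
    exact mul_le_mul_of_nonneg_right (by linarith) (by linarith)
  have hΓvarle : ∀ s ∈ Icc (0:ℝ) 1,
      eVariationOn Γ (Icc 0 s) ≤ eVariationOn γ (Icc 0 (m s)) ∧
      eVariationOn Γ (Icc s 1) ≤ eVariationOn γ (Icc (m s) 1) := by
    intro s hs
    constructor
    · exact eVariationOn.comp_le_of_monotoneOn γ m
        (fun u hu v _ huv => hmmono u v hu.1 huv)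
        (fun u hu => ⟨(hmmem u hu.1).1, hmmono u s hu.1 hu.2⟩)
    · exact eVariationOn.comp_le_of_monotoneOn γ m
        (fun u hu v _ huv => hmmono u v (hs.1.trans hu.1) huv)
        (fun u hu => ⟨hmmono s u hs.1 hu.1, (hmmem u (hs.1.trans hu.1)).2⟩)
  have hΓ0 : Γ 0 = γ 0 := by rw [hΓdef]; simp only [Function.comp_apply, hm0]
  have hΓ1 : Γ 1 = γ 1 := by rw [hΓdef]; simp only [Function.comp_apply, hm1]
  refine ⟨Γ, ⟨?_, ?_, ?_, ?_⟩, hΓ0, hΓ1, hΓlip⟩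
  · -- continuity
    have hL : LipschitzOnWith (Real.toNNReal (1 + D)) Γ (Icc 0 1) := by
      intro p hp q hq
      have key : ∀ p' q' : ℝ, p' ∈ Icc (0:ℝ) 1 → q' ∈ Icc (0:ℝ) 1 → p' ≤ q' →
          edist (Γ p') (Γ q') ≤ ↑(Real.toNNReal (1 + D)) * edist p' q' := by
        intro p' q' hp' hq' hpq
        refine (hΓlip p' hp' q' hq' hpq).trans ?_
        calc ENNReal.ofReal ((1 + D) * (q' - p'))
            = ENNReal.ofReal (1 + D) * ENNReal.ofReal (q' - p') :=
              ENNReal.ofReal_mul (by linarith)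
          _ ≤ ENNReal.ofReal (1 + D) * edist p' q' := by
              refine mul_le_mul_right ?_ _
              rw [edist_dist]
              refine ENNReal.ofReal_le_ofReal ?_
              rw [Real.dist_eq]
              exact (le_abs_self (q' - p')).trans (le_of_eq (abs_sub_comm q' p'))
          _ = ↑(Real.toNNReal (1 + D)) * edist p' q' := rfl
      rcases le_total p q with hpq | hpq
      · exact key p q hp hq hpq
      · rw [edist_comm]
        rw [edist_comm (p : ℝ) q]
        exact key q p hq hp hpq
    exact hL.continuousOn
  · exact fun u hu => hmap (hmmem u hu.1)
  · rw [hΓ0, hΓ1, ← hD]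
    have h1 := (hΓvarle 1 ⟨zero_le_one, le_rfl⟩).1
    rw [hm1] at h1
    exact h1.trans hvar
  · intro t ht
    refine le_trans (min_le_min (hΓvarle t ht).1 (hΓvarle t ht).2) ?_
    have hmain := hcig (m t) (hmmem t ht.1)
    have hΓt : Γ t = γ (m t) := rfl
    rw [hΓt]
    exact le_trans (min_le_min le_rfl le_rfl) hmain

/-- In an `A`-uniform domain `Ω ⊆ ℂ`, any two points of the closure of `Ω`
can be joined by an `A`-uniform curve `γ : [0,1] → closure(Ω)`. -/
theorem statement_18 (A : ℝ) (hA : 1 ≤ A) (Ω : Set ℂ) (h : IsUniformDomain A Ω) :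
    ∀ x ∈ closure Ω, ∀ y ∈ closure Ω,
      ∃ γ : ℝ → ℂ, IsUniformCurveIn A Ω γ ∧ γ 0 = x ∧ γ 1 = y := by
  intro x hx y hy
  have hA0 : (0:ℝ) ≤ A := zero_le_one.trans hA
  -- approximating sequences in Ω
  choose a haΩ hax using fun n : ℕ =>
    Metric.mem_closure_iff.1 hx (1 / (n + 1) : ℝ) (by positivity)
  choose b hbΩ hby using fun n : ℕ =>
    Metric.mem_closure_iff.1 hy (1 / (n + 1) : ℝ) (by positivity)
  have hone : ∀ n : ℕ, (1 : ℝ) / (n + 1) ≤ 1 := by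
    intro n
    rw [div_le_one (by positivity)]
    simp
  have hax1 : ∀ n, dist x (a n) ≤ 1 := fun n => (hax n).le.trans (hone n)
  have hby1 : ∀ n, dist y (b n) ≤ 1 := fun n => (hby n).le.trans (hone n)
  have htends : Filter.Tendsto (fun n : ℕ => (1 : ℝ) / (n + 1)) Filter.atTop (nhds 0) :=
    tendsto_one_div_add_atTop_nhds_zero_nat
  have hlimx : Filter.Tendsto a Filter.atTop (nhds x) := by
    rw [tendsto_iff_dist_tendsto_zero]
    refine squeeze_zero (fun n => dist_nonneg) (fun n => ?_) htends
    rw [dist_comm]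
    exact (hax n).le
  have hlimy : Filter.Tendsto b Filter.atTop (nhds y) := by
    rw [tendsto_iff_dist_tendsto_zero]
    refine squeeze_zero (fun n => dist_nonneg) (fun n => ?_) htends
    rw [dist_comm]
    exact (hby n).le
  -- Lipschitz uniform curves joining them
  have hcur : ∀ n : ℕ, ∃ Γ : ℝ → ℂ, IsUniformCurve A Ω Γ ∧ Γ 0 = a n ∧ Γ 1 = b n ∧
      ∀ s ∈ Set.Icc (0:ℝ) 1, ∀ s' ∈ Set.Icc (0:ℝ) 1, s ≤ s' →
        edist (Γ s) (Γ s') ≤ ENNReal.ofReal ((1 + A * dist (a n) (b n)) * (s' - s)) := by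
    intro n
    obtain ⟨γ, hγ, h0, h1⟩ := h.2.2 (a n) (haΩ n) (b n) (hbΩ n)
    obtain ⟨Γ, hΓ, e0, e1, hl⟩ := evar_reparam A hA0 Ω γ hγ
    rw [h0, h1] at hl
    exact ⟨Γ, hΓ, by rw [e0, h0], by rw [e1, h1], hl⟩
  choose Γ hΓu hΓ0 hΓ1 hΓl using hcur
  set L : ℝ := 1 + A * (dist x y + 2) with hL
  have hdab : ∀ n, dist (a n) (b n) ≤ dist x y + 2 := by
    intro n
    have h4 := dist_triangle4 (a n) x y (b n)
    have h5 : dist (a n) x ≤ 1 := by rw [dist_comm]; exact hax1 n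
    have h6 : dist y (b n) ≤ 1 := hby1 n
    linarith
  have hKL : ∀ n, 1 + A * dist (a n) (b n) ≤ L := by
    intro n
    rw [hL]
    have := mul_le_mul_of_nonneg_left (hdab n) hA0
    linarith
  have hΓlip : ∀ n, ∀ s ∈ Set.Icc (0:ℝ) 1, ∀ s' ∈ Set.Icc (0:ℝ) 1, s ≤ s' →
      edist (Γ n s) (Γ n s') ≤ ENNReal.ofReal (L * (s' - s)) := by
    intro n s hs s' hs' hss
    refine (hΓl n s hs s' hs' hss).trans (ENNReal.ofReal_le_ofReal ?_)
    exact mul_le_mul_of_nonneg_right (hKL n) (by linarith)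
  have hvarn : ∀ n, eVariationOn (Γ n) (Set.Icc 0 1) ≤
      ENNReal.ofReal (A * dist (a n) (b n)) := by
    intro n
    have := (hΓu n).2.2.1
    rwa [hΓ0, hΓ1] at this
  -- the curves live in a fixed compact ball
  set R : ℝ := A * (dist x y + 2) + 1 with hR
  have hball : ∀ n, ∀ t ∈ Set.Icc (0:ℝ) 1, Γ n t ∈ Metric.closedBall x R := by
    intro n t ht
    have h1 : edist (Γ n 0) (Γ n t) ≤ eVariationOn (Γ n) (Set.Icc 0 1) :=
      eVariationOn.edist_le (Γ n) ⟨le_rfl, zero_le_one⟩ ht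
    have h2 : edist (Γ n 0) (Γ n t) ≤ ENNReal.ofReal (A * dist (a n) (b n)) :=
      h1.trans (hvarn n)
    have h3 : dist (Γ n 0) (Γ n t) ≤ A * dist (a n) (b n) := by
      rw [edist_dist] at h2
      exact (ENNReal.ofReal_le_ofReal_iff (mul_nonneg hA0 dist_nonneg)).1 h2
    rw [Metric.mem_closedBall]
    have h4 : dist (Γ n t) x ≤ dist (Γ n t) (Γ n 0) + dist (Γ n 0) x :=
      dist_triangle _ _ _
    have h5 : dist (Γ n 0) x ≤ 1 := by rw [hΓ0, dist_comm]; exact hax1 n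
    have h6 : dist (Γ n t) (Γ n 0) ≤ A * dist (a n) (b n) := by
      rw [dist_comm]; exact h3
    have h7 : A * dist (a n) (b n) ≤ A * (dist x y + 2) :=
      mul_le_mul_of_nonneg_left (hdab n) hA0
    rw [hR]
    linarith
  -- limit along an ultrafilter
  set U : Ultrafilter ℕ := Ultrafilter.of Filter.atTop with hUdef
  have hU : (U : Filter ℕ) ≤ Filter.atTop := Ultrafilter.of_le _
  set γ : ℝ → ℂ := fun t => limUnder (U : Filter ℕ) (fun n => Γ n t) with hγdef
  have htend : ∀ t ∈ Set.Icc (0:ℝ) 1,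
      Filter.Tendsto (fun n => Γ n t) (U : Filter ℕ) (nhds (γ t)) := by
    intro t ht
    obtain ⟨z, _, hz⟩ := (isCompact_closedBall x R).ultrafilter_le_nhds
      (U.map (fun n => Γ n t)) (by
        rw [Ultrafilter.coe_map, Filter.le_principal_iff, Filter.mem_map]
        exact Filter.univ_mem' (fun n => hball n t ht))
    have hexz : ∃ z, Filter.Tendsto (fun n => Γ n t) (U : Filter ℕ) (nhds z) :=
      ⟨z, by rwa [Ultrafilter.coe_map] at hz⟩
    simpa only [hγdef] using tendsto_nhds_limUnder hexz
  have h0I : (0:ℝ) ∈ Set.Icc (0:ℝ) 1 := ⟨le_rfl, zero_le_one⟩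
  have h1I : (1:ℝ) ∈ Set.Icc (0:ℝ) 1 := ⟨zero_le_one, le_rfl⟩
  have hγ0 : γ 0 = x := by
    have h1 : Filter.Tendsto (fun n => Γ n 0) (U : Filter ℕ) (nhds x) := by
      simp only [hΓ0]
      exact hlimx.mono_left hU
    exact tendsto_nhds_unique (htend 0 h0I) h1
  have hγ1 : γ 1 = y := by
    have h1 : Filter.Tendsto (fun n => Γ n 1) (U : Filter ℕ) (nhds y) := by
      simp only [hΓ1]
      exact hlimy.mono_left hU
    exact tendsto_nhds_unique (htend 1 h1I) h1
  -- continuity of the limit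
  have hlip : ∀ s ∈ Set.Icc (0:ℝ) 1, ∀ s' ∈ Set.Icc (0:ℝ) 1, s ≤ s' →
      edist (γ s) (γ s') ≤ ENNReal.ofReal (L * (s' - s)) := by
    intro s hs s' hs' hss
    refine le_of_tendsto ((htend s hs).edist (htend s' hs')) ?_
    exact Filter.Eventually.of_forall (fun n => hΓlip n s hs s' hs' hss)
  have hcont : ContinuousOn γ (Set.Icc 0 1) := by
    have hLp : LipschitzOnWith (Real.toNNReal L) γ (Set.Icc 0 1) := by
      intro p hp q hq
      have key : ∀ p' q' : ℝ, p' ∈ Set.Icc (0:ℝ) 1 → q' ∈ Set.Icc (0:ℝ) 1 → p' ≤ q' →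
          edist (γ p') (γ q') ≤ ↑(Real.toNNReal L) * edist p' q' := by
        intro p' q' hp' hq' hpq
        have hL0 : (0:ℝ) ≤ L := by
          rw [hL]
          have := mul_nonneg hA0 (by have := dist_nonneg (x := x) (y := y); linarith :
            (0:ℝ) ≤ dist x y + 2)
          linarith
        refine (hlip p' hp' q' hq' hpq).trans ?_
        calc ENNReal.ofReal (L * (q' - p'))
            = ENNReal.ofReal L * ENNReal.ofReal (q' - p') := ENNReal.ofReal_mul hL0
          _ ≤ ENNReal.ofReal L * edist p' q' := by
              refine mul_le_mul_right ?_ _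
              rw [edist_dist]
              refine ENNReal.ofReal_le_ofReal ?_
              rw [Real.dist_eq]
              exact (le_abs_self (q' - p')).trans (le_of_eq (abs_sub_comm q' p'))
          _ = ↑(Real.toNNReal L) * edist p' q' := rfl
      rcases le_total p q with hpq | hpq
      · exact key p q hp hq hpq
      · rw [edist_comm, edist_comm (p : ℝ) q]
        exact key q p hq hp hpq
    exact hLp.continuousOn
  -- maps into the closure
  have hmapsto : Set.MapsTo γ (Set.Icc 0 1) (closure Ω) := fun t ht =>
    mem_closure_of_tendsto (htend t ht)
      (Filter.Eventually.of_forall (fun n => (hΓu n).2.1 ht))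
  -- total variation bound
  have hdistlim : Filter.Tendsto (fun n => ENNReal.ofReal (A * dist (a n) (b n)))
      (U : Filter ℕ) (nhds (ENNReal.ofReal (A * dist x y))) := by
    have h1 : Filter.Tendsto (fun n => A * dist (a n) (b n)) Filter.atTop
        (nhds (A * dist x y)) := (hlimx.dist hlimy).const_mul A
    exact (ENNReal.continuous_ofReal.tendsto _).comp (h1.mono_left hU)
  have hvar : eVariationOn γ (Set.Icc 0 1) ≤ ENNReal.ofReal (A * dist (γ 0) (γ 1)) := by
    rw [hγ0, hγ1]
    by_contra hlt
    push_neg at hlt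
    obtain ⟨c, hc1, hc2⟩ := exists_between hlt
    have he1 : ∀ᶠ n in (U : Filter ℕ), c < eVariationOn (Γ n) (Set.Icc 0 1) :=
      eVariationOn.lowerSemicontinuous_aux (fun t ht => htend t ht) hc2
    have he2 : ∀ᶠ n in (U : Filter ℕ), ENNReal.ofReal (A * dist (a n) (b n)) < c :=
      hdistlim.eventually_lt_const hc1
    obtain ⟨n, h1, h2⟩ := (he1.and he2).exists
    exact absurd ((hvarn n).trans_lt h2) (not_lt.2 h1.le)
  -- cigar condition
  have hcig : ∀ t ∈ Set.Icc (0:ℝ) 1,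
      min (eVariationOn γ (Set.Icc 0 t)) (eVariationOn γ (Set.Icc t 1))
        ≤ ENNReal.ofReal (A * Metric.infDist (γ t) (frontier Ω)) := by
    intro t ht
    by_contra hlt
    push_neg at hlt
    obtain ⟨c, hc1, hc2⟩ := exists_between hlt
    have hrhs : Filter.Tendsto
        (fun n => ENNReal.ofReal (A * Metric.infDist (Γ n t) (frontier Ω)))
        (U : Filter ℕ)
        (nhds (ENNReal.ofReal (A * Metric.infDist (γ t) (frontier Ω)))) := by
      have hc : Continuous fun z : ℂ =>
          ENNReal.ofReal (A * Metric.infDist z (frontier Ω)) :=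
        ENNReal.continuous_ofReal.comp
          (continuous_const.mul (Metric.continuous_infDist_pt _))
      exact (hc.tendsto _).comp (htend t ht)
    have he2 : ∀ᶠ n in (U : Filter ℕ),
        ENNReal.ofReal (A * Metric.infDist (Γ n t) (frontier Ω)) < c :=
      hrhs.eventually_lt_const hc1
    have he0 : ∀ᶠ n in (U : Filter ℕ), c < eVariationOn (Γ n) (Set.Icc 0 t) :=
      eVariationOn.lowerSemicontinuous_aux
        (fun u hu => htend u (Set.Icc_subset_Icc le_rfl ht.2 hu))
        (lt_of_lt_of_le hc2 (min_le_left _ _))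
    have he1 : ∀ᶠ n in (U : Filter ℕ), c < eVariationOn (Γ n) (Set.Icc t 1) :=
      eVariationOn.lowerSemicontinuous_aux
        (fun u hu => htend u (Set.Icc_subset_Icc ht.1 le_rfl hu))
        (lt_of_lt_of_le hc2 (min_le_right _ _))
    obtain ⟨n, h0, h1, h2⟩ := (he0.and (he1.and he2)).exists
    have hmin := (hΓu n).2.2.2 t ht
    have : c < c := lt_of_lt_of_le (lt_min h0 h1) (hmin.trans h2.le)
    exact lt_irrefl c this
  exact ⟨γ, ⟨hcont, hmapsto, hvar, hcig⟩, hγ0, hγ1⟩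
end
end
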